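/- arXiv:1204.5138 — 2 statements merged into one kernel-verified Lean document; each statement's English description precedes it below -/
import Mathlib

section
/- For each choice of sign, the assignment s_i ↦ ŝ̃_i^± (i = 1,…,n−1) defines an action of the symmetric group S_n on V ⊗ ℂ(z_1,…,z_n,h); that is, the operators ŝ̃_i^± satisfy (ŝ̃_i^±)² = id, ŝ̃_i^± ŝ̃_j^± = ŝ̃_j^± ŝ̃_i^± for |i−j| > 1, and ŝ̃_i^± ŝ̃_{i+1}^± ŝ̃_i^± = ŝ̃_{i+1}^± ŝ̃_i^± ŝ̃_{i+1}^±. -/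
open scoped BigOperators

noncomputable section

namespace GRTV

/-- The field `ℂ(z_1,…,z_n,h)` of rational functions. -/
abbrev K (n : ℕ) : Type := FractionRing (MvPolynomial (Fin n ⊕ Unit) ℂ)

/-- The variable `z_i`. -/
def z {n : ℕ} (i : Fin n) : K n :=
  algebraMap (MvPolynomial (Fin n ⊕ Unit) ℂ) (K n) (MvPolynomial.X (Sum.inl i))

/-- The variable `h`. -/
def hvar {n : ℕ} : K n :=
  algebraMap (MvPolynomial (Fin n ⊕ Unit) ℂ) (K n) (MvPolynomial.X (Sum.inr ()))

/-- The field automorphism of `ℂ(z_1,…,z_n,h)` permuting the variables `z_i` by `σ`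
(and fixing `h`); `f ↦ f^σ`. -/
def permK {n : ℕ} (σ : Equiv.Perm (Fin n)) : K n ≃+* K n :=
  IsFractionRing.ringEquivOfRingEquiv
    (MvPolynomial.renameEquiv ℂ (Equiv.sumCongr σ (Equiv.refl Unit))).toRingEquiv

/-- `V ⊗ ℂ(z_1,…,z_n,h)` in coordinates: a vector is the family of its coordinates
in the basis `{v_I}`, where a basis index (a decomposition `I`) is recorded as the word
`m : Fin n → Fin N` with `I_j = m⁻¹(j)`. -/
abbrev VV (n N : ℕ) : Type := (Fin n → Fin N) → K n

/-- `h` for the `+` case (`ε = true`) and `-h` for the `−` case (`ε = false`). -/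
def sign' {n : ℕ} (ε : Bool) : K n := if ε then hvar else -hvar

def fin1 {n : ℕ} (i : ℕ) (hi : i + 1 < n) : Fin n := ⟨i, Nat.lt_of_succ_lt hi⟩
def fin2 {n : ℕ} (i : ℕ) (hi : i + 1 < n) : Fin n := ⟨i + 1, hi⟩

/-- The operator `ŝ̃_i^±`:
`ŝ̃_i^± f = ((z_i−z_{i+1})P^{(i,i+1)} ∓ h)/(z_i−z_{i+1} ∓ h) · f^{s_i}`. -/
def tOp {n N : ℕ} (ε : Bool) (i : ℕ) (hi : i + 1 < n) (f : VV n N) : VV n N :=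
  fun m =>
    ((z (fin1 i hi) - z (fin2 i hi)) *
          permK (Equiv.swap (fin1 i hi) (fin2 i hi))
            (f (m ∘ ⇑(Equiv.swap (fin1 i hi) (fin2 i hi))))
        - sign' ε * permK (Equiv.swap (fin1 i hi) (fin2 i hi)) (f m))
      / (z (fin1 i hi) - z (fin2 i hi) - sign' ε)

open MvPolynomial in
theorem permK_algebraMap {n : ℕ} (σ : Equiv.Perm (Fin n)) (p : MvPolynomial (Fin n ⊕ Unit) ℂ) :
    permK σ (algebraMap _ (K n) p) =
      algebraMap _ (K n) (rename (Equiv.sumCongr σ (Equiv.refl Unit)) p) := by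
  simp [permK, IsFractionRing.ringEquivOfRingEquiv_algebraMap]

theorem permK_z {n : ℕ} (σ : Equiv.Perm (Fin n)) (i : Fin n) :
    permK σ (z i) = z (σ i) := by
  simp [z, permK_algebraMap]

theorem permK_hvar {n : ℕ} (σ : Equiv.Perm (Fin n)) : permK σ (hvar : K n) = hvar := by
  simp [hvar, permK_algebraMap]

theorem permK_sign {n : ℕ} (σ : Equiv.Perm (Fin n)) (ε : Bool) :
    permK σ (sign' ε : K n) = sign' ε := by
  cases ε <;> simp [sign', permK_hvar]

theorem permK_permK {n : ℕ} (σ τ : Equiv.Perm (Fin n)) (x : K n) :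
    permK σ (permK τ x) = permK (σ * τ) x := by
  have : ((permK σ).toRingHom.comp (permK τ).toRingHom).comp
      (algebraMap (MvPolynomial (Fin n ⊕ Unit) ℂ) (K n)) =
      (permK (σ * τ)).toRingHom.comp (algebraMap (MvPolynomial (Fin n ⊕ Unit) ℂ) (K n)) := by
    ext p <;> simp [permK_algebraMap, MvPolynomial.rename_rename]
  have := IsLocalization.ringHom_ext (nonZeroDivisors (MvPolynomial (Fin n ⊕ Unit) ℂ)) this
  exact congrArg (· x) (congrArg (fun (g : K n →+* K n) => (g : K n → K n)) this)
theorem z_sub_z_sub_sign_ne {n : ℕ} (a b : Fin n) (hab : a ≠ b) (ε : Bool) :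
    (z a - z b - sign' ε : K n) ≠ 0 := by
  intro h
  have hinj : Function.Injective (algebraMap (MvPolynomial (Fin n ⊕ Unit) ℂ) (K n)) :=
    IsFractionRing.injective _ _
  set p : MvPolynomial (Fin n ⊕ Unit) ℂ :=
    MvPolynomial.X (Sum.inl a) - MvPolynomial.X (Sum.inl b)
      - (if ε then MvPolynomial.X (Sum.inr ()) else -MvPolynomial.X (Sum.inr ())) with hp
  have hmap : (z a - z b - sign' ε : K n) = algebraMap _ (K n) p := by
    cases ε <;> simp only [hp, RingHom.map_sub, RingHom.map_neg, z, sign', hvar, if_true, if_false, Bool.false_eq_true]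
  have hp0 : p = 0 := hinj (by rw [← hmap, h, map_zero])
  have := congrArg (MvPolynomial.eval (fun v => if v = Sum.inl a then (1:ℂ) else 0)) hp0
  cases ε <;> simp [hp, MvPolynomial.eval_X, hab, Ne.symm hab] at this
theorem permK_one {n : ℕ} (x : K n) : permK (1 : Equiv.Perm (Fin n)) x = x := by
  have : (permK (1 : Equiv.Perm (Fin n))).toRingHom.comp
      (algebraMap (MvPolynomial (Fin n ⊕ Unit) ℂ) (K n)) =
      (RingHom.id (K n)).comp (algebraMap (MvPolynomial (Fin n ⊕ Unit) ℂ) (K n)) := by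
    ext p <;> simp [permK_algebraMap]
  have := IsLocalization.ringHom_ext (nonZeroDivisors (MvPolynomial (Fin n ⊕ Unit) ℂ)) this
  exact congrArg (· x) (congrArg (fun (g : K n →+* K n) => (g : K n → K n)) this)

theorem compcomp {n N : ℕ} (g : Fin n → Fin N) (σ τ : Equiv.Perm (Fin n)) :
    (g ∘ ⇑σ) ∘ ⇑τ = g ∘ ⇑(σ * τ) := by
  funext x; simp [Equiv.Perm.mul_apply]

theorem fin1_ne_fin2 {n : ℕ} (i : ℕ) (hi : i + 1 < n) : fin1 i hi ≠ fin2 i hi := by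
  simp [fin1, fin2, Fin.ext_iff]

theorem tOp_invol {n N : ℕ} (ε : Bool) (i : ℕ) (hi : i + 1 < n) (f : VV n N) :
    tOp ε i hi (tOp ε i hi f) = f := by
  funext m
  set a := fin1 i hi with ha
  set b := fin2 i hi with hb
  have hab : a ≠ b := fin1_ne_fin2 i hi
  have h1 : (z a - z b - sign' ε : K n) ≠ 0 := z_sub_z_sub_sign_ne a b hab ε
  have h2 : (z b - z a - sign' ε : K n) ≠ 0 := z_sub_z_sub_sign_ne b a (Ne.symm hab) ε
  simp only [tOp, ← ha, ← hb, map_div₀, map_sub, map_mul, permK_permK, permK_sign,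
    compcomp, Equiv.swap_mul_self, permK_one, Equiv.Perm.coe_one, Function.comp_id,
    permK_z, Equiv.swap_apply_left, Equiv.swap_apply_right]
  field_simp
  ring
set_option maxHeartbeats 1600000 in
set_option synthInstance.maxHeartbeats 400000 in
theorem tOp_comm {n N : ℕ} (ε : Bool) (i j : ℕ) (hi : i + 1 < n) (hj : j + 1 < n)
    (hij : i + 1 < j) (f : VV n N) :
    tOp ε i hi (tOp ε j hj f) = tOp ε j hj (tOp ε i hi f) := by
  funext m
  set a := fin1 i hi with ha
  set b := fin2 i hi with hb
  set c := fin1 j hj with hc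
  set d := fin2 j hj with hd
  have hac : a ≠ c := by rw [ha, hc]; simp only [fin1, ne_eq, Fin.mk.injEq]; omega
  have had : a ≠ d := by rw [ha, hd]; simp only [fin1, fin2, ne_eq, Fin.mk.injEq]; omega
  have hbc : b ≠ c := by rw [hb, hc]; simp only [fin1, fin2, ne_eq, Fin.mk.injEq]; omega
  have hbd : b ≠ d := by rw [hb, hd]; simp only [fin2, ne_eq, Fin.mk.injEq]; omega
  have hab : a ≠ b := fin1_ne_fin2 i hi
  have hcd : c ≠ d := fin1_ne_fin2 j hj
  have hdis : (Equiv.swap a b).Disjoint (Equiv.swap c d) := by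
    intro x
    by_cases hx : x = a ∨ x = b
    · right
      rcases hx with hx | hx <;> subst hx <;>
        exact Equiv.swap_apply_of_ne_of_ne (by assumption) (by assumption)
    · left
      push_neg at hx
      exact Equiv.swap_apply_of_ne_of_ne hx.1 hx.2
  have hcomm : Equiv.swap a b * Equiv.swap c d = Equiv.swap c d * Equiv.swap a b :=
    hdis.commute.eq
  have h1 : (z a - z b - sign' ε : K n) ≠ 0 := z_sub_z_sub_sign_ne a b hab ε
  have h2 : (z c - z d - sign' ε : K n) ≠ 0 := z_sub_z_sub_sign_ne c d hcd ε
  simp only [tOp, ← ha, ← hb, ← hc, ← hd, map_div₀, map_sub, map_mul, permK_permK,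
    permK_sign, compcomp, permK_z, Equiv.swap_apply_left, Equiv.swap_apply_right,
    Equiv.swap_apply_of_ne_of_ne hac had, Equiv.swap_apply_of_ne_of_ne hbc hbd,
    Equiv.swap_apply_of_ne_of_ne (Ne.symm hac) (Ne.symm hbc),
    Equiv.swap_apply_of_ne_of_ne (Ne.symm had) (Ne.symm hbd), hcomm]
  field_simp
  ring
def gOp {n N : ℕ} (ε : Bool) (a b : Fin n) (f : VV n N) : VV n N :=
  fun m =>
    ((z a - z b) * permK (Equiv.swap a b) (f (m ∘ ⇑(Equiv.swap a b)))
        - sign' ε * permK (Equiv.swap a b) (f m))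
      / (z a - z b - sign' ε)

theorem tOp_eq_gOp {n N : ℕ} (ε : Bool) (i : ℕ) (hi : i + 1 < n) :
    (tOp ε i hi : VV n N → VV n N) = gOp ε (fin1 i hi) (fin2 i hi) := rfl

set_option maxHeartbeats 4000000 in
set_option synthInstance.maxHeartbeats 1000000 in
theorem gOp_braid {n N : ℕ} (ε : Bool) (a b c : Fin n)
    (hab : a ≠ b) (hbc : b ≠ c) (hac : a ≠ c) (f : VV n N) :
    gOp ε a b (gOp ε b c (gOp ε a b f)) = gOp ε b c (gOp ε a b (gOp ε b c f)) := by
  funext m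
  have e1 : Equiv.swap a b * Equiv.swap b c * Equiv.swap a b = Equiv.swap c a := by
    have h := Equiv.swap_mul_swap_mul_swap (Ne.symm hbc) (Ne.symm hac)
    rwa [Equiv.swap_comm b a, Equiv.swap_comm c b, Equiv.swap_comm a c] at h
  have e2 : Equiv.swap b c * Equiv.swap a b * Equiv.swap b c = Equiv.swap c a :=
    Equiv.swap_mul_swap_mul_swap hab hac
  have h3 : Equiv.swap a b * (Equiv.swap b c * Equiv.swap a b)
      = Equiv.swap b c * (Equiv.swap a b * Equiv.swap b c) := by
    rw [← mul_assoc, ← mul_assoc, e1, e2]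
  have h1 : (z a - z b - sign' ε : K n) ≠ 0 := z_sub_z_sub_sign_ne a b hab ε
  have h2 : (z b - z a - sign' ε : K n) ≠ 0 := z_sub_z_sub_sign_ne b a (Ne.symm hab) ε
  have h4 : (z b - z c - sign' ε : K n) ≠ 0 := z_sub_z_sub_sign_ne b c hbc ε
  have h5 : (z c - z b - sign' ε : K n) ≠ 0 := z_sub_z_sub_sign_ne c b (Ne.symm hbc) ε
  have h6 : (z a - z c - sign' ε : K n) ≠ 0 := z_sub_z_sub_sign_ne a c hac ε
  have h7 : (z c - z a - sign' ε : K n) ≠ 0 := z_sub_z_sub_sign_ne c a (Ne.symm hac) ε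
  simp only [gOp, map_div₀, map_sub, map_mul, permK_permK, permK_sign, compcomp,
    permK_z, mul_assoc, h3, Equiv.Perm.mul_apply, Equiv.swap_apply_left,
    Equiv.swap_apply_right,
    Equiv.swap_apply_of_ne_of_ne (Ne.symm hac) (Ne.symm hbc),
    Equiv.swap_apply_of_ne_of_ne hab hac]
  field_simp
  simp only [Equiv.swap_mul_self, Equiv.Perm.coe_one, Function.comp_id]
  ring
section GroupDev

variable {n N : ℕ}

/-- Generator permutations, junk `1` out of range. -/
def Sgen (n : ℕ) (i : ℕ) : Equiv.Perm (Fin n) :=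
  if h : i + 1 < n then Equiv.swap (fin1 i h) (fin2 i h) else 1

/-- Generator operators, junk `1` out of range. -/
def Tgen (n N : ℕ) (ε : Bool) (i : ℕ) : Function.End (VV n N) :=
  if h : i + 1 < n then tOp ε i h else 1

def prodS (n : ℕ) (l : List ℕ) : Equiv.Perm (Fin n) := (l.map (Sgen n)).prod

def prodT (n N : ℕ) (ε : Bool) (l : List ℕ) : Function.End (VV n N) :=
  (l.map (Tgen n N ε)).prod

theorem prodS_nil : prodS n [] = 1 := rfl

theorem prodS_append (l₁ l₂ : List ℕ) :
    prodS n (l₁ ++ l₂) = prodS n l₁ * prodS n l₂ := by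
  simp [prodS]

theorem prodT_append (ε : Bool) (l₁ l₂ : List ℕ) :
    prodT n N ε (l₁ ++ l₂) = prodT n N ε l₁ * prodT n N ε l₂ := by
  simp [prodT]

theorem prodS_cons (i : ℕ) (l : List ℕ) :
    prodS n (i :: l) = Sgen n i * prodS n l := by
  simp [prodS]

theorem prodT_cons (ε : Bool) (i : ℕ) (l : List ℕ) :
    prodT n N ε (i :: l) = Tgen n N ε i * prodT n N ε l := by
  simp [prodT]

theorem Sgen_apply_of_ne (i : ℕ) (x : Fin n) (h1 : (x : ℕ) ≠ i) (h2 : (x : ℕ) ≠ i + 1) :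
    Sgen n i x = x := by
  unfold Sgen
  split
  · exact Equiv.swap_apply_of_ne_of_ne
      (by simp [fin1, Fin.ext_iff]; omega) (by simp [fin2, Fin.ext_iff]; omega)
  · rfl

theorem Sgen_mul_self (i : ℕ) : Sgen n i * Sgen n i = 1 := by
  unfold Sgen; split
  · exact Equiv.swap_mul_self _ _
  · simp

theorem Sgen_inv (i : ℕ) : (Sgen n i)⁻¹ = Sgen n i := by
  rw [inv_eq_iff_mul_eq_one]; exact Sgen_mul_self i

theorem prodS_apply_of_forall_ne (l : List ℕ) (x : Fin n)
    (h : ∀ i ∈ l, (x : ℕ) ≠ i ∧ (x : ℕ) ≠ i + 1) : prodS n l x = x := by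
  induction l with
  | nil => rfl
  | cons a l ih =>
      rw [prodS_cons, Equiv.Perm.mul_apply, ih (fun i hi => h i (List.mem_cons_of_mem a hi)),
        Sgen_apply_of_ne a x (h a (List.mem_cons_self)).1 (h a (List.mem_cons_self)).2]

/-- The chunk `[k-1, k-2, …, j]`. -/
def chunk (k j : ℕ) : List ℕ := (List.range' j (k - j)).reverse

theorem chunk_self (k : ℕ) : chunk k k = [] := by simp [chunk]

theorem mem_chunk {k j i : ℕ} (h : i ∈ chunk k j) : j ≤ i ∧ i < k := by
  simp only [chunk, List.mem_reverse, List.mem_range'] at h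
  omega

theorem chunk_split {k m j : ℕ} (h1 : j ≤ m) (h2 : m ≤ k) :
    chunk k j = chunk k m ++ chunk m j := by
  unfold chunk
  rw [← List.reverse_append]
  congr 1
  have h := @List.range'_append j (m - j) (k - m) 1
  rw [one_mul, show j + (m - j) = m by omega, show m - j + (k - m) = k - j by omega] at h
  exact h.symm

theorem chunk_succ_left {k j : ℕ} (h : j < k) : chunk k j = chunk k (j+1) ++ [j] := by
  rw [chunk_split (Nat.le_succ j) h]
  congr 1
  simp [chunk, show j + 1 - j = 1 by omega]

theorem chunk_top {k j : ℕ} (h : j ≤ k) : chunk (k+1) j = k :: chunk k j := by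
  rw [chunk_split h (Nat.le_succ k)]
  simp [chunk, show k + 1 - k = 1 by omega]

end GroupDev
section GroupDev2

variable {n N : ℕ}

theorem chunkS_fix {k j : ℕ} (x : Fin n) (h : (x : ℕ) < j ∨ k < (x : ℕ)) :
    prodS n (chunk k j) x = x := by
  apply prodS_apply_of_forall_ne
  intro i hi
  have := mem_chunk hi
  omega

theorem Sgen_apply_bot {j : ℕ} (h : j + 1 < n) (p : j < n) :
    Sgen n j ⟨j, p⟩ = ⟨j + 1, h⟩ := by
  unfold Sgen
  rw [dif_pos h]
  exact Equiv.swap_apply_left _ _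

theorem Sgen_apply_top {j : ℕ} (h : j + 1 < n) (p : j < n) :
    Sgen n j ⟨j + 1, h⟩ = ⟨j, p⟩ := by
  unfold Sgen
  rw [dif_pos h]
  exact Equiv.swap_apply_right _ _

theorem chunkS_apply_bot {k : ℕ} (hk : k < n) :
    ∀ d j (_ : j ≤ k) (_ : k - j = d), prodS n (chunk k j) ⟨j, by omega⟩ = ⟨k, hk⟩ := by
  intro d
  induction d with
  | zero =>
      intro j hjk hd
      have : j = k := by omega
      subst this
      simp [chunk_self, prodS_nil]
  | succ d ih =>
      intro j hjk hd
      have hjlt : j < k := by omega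
      rw [chunk_succ_left hjlt, prodS_append, Equiv.Perm.mul_apply]
      have h1 : prodS n [j] ⟨j, by omega⟩ = ⟨j + 1, by omega⟩ := by
        simp only [prodS, List.map_cons, List.map_nil, List.prod_cons, List.prod_nil, mul_one]
        exact Sgen_apply_bot (by omega) (by omega)
      rw [h1]
      exact ih (j + 1) (by omega) (by omega)

theorem chunkS_apply_mid {k j m : ℕ} (hk : k < n) (hjm : j ≤ m) (hmk : m < k) :
    prodS n (chunk k j) ⟨m + 1, by omega⟩ = ⟨m, by omega⟩ := by
  rw [chunk_split (show j ≤ m + 1 by omega) (show m + 1 ≤ k by omega),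
    chunk_split (show j ≤ m by omega) (show m ≤ m + 1 by omega),
    show chunk (m+1) m = [m] by simp [chunk, show m + 1 - m = 1 by omega],
    prodS_append, prodS_append]
  simp only [Equiv.Perm.mul_apply]
  rw [chunkS_fix (⟨m+1, by omega⟩ : Fin n) (Or.inr (by simp)),
    show prodS n [m] = Sgen n m by simp [prodS],
    Sgen_apply_top (by omega) (by omega),
    chunkS_fix (⟨m, by omega⟩ : Fin n) (Or.inl (by simp))]

/-- The canonical word of a permutation fixing all points `≥ k`. -/
def word (n : ℕ) : ℕ → Equiv.Perm (Fin n) → List ℕ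
  | 0, _ => []
  | (k+1), σ =>
      if h : k < n then
        word n k (σ * (prodS n (chunk k ((σ⁻¹ ⟨k, h⟩ : Fin n) : ℕ)))⁻¹)
          ++ chunk k ((σ⁻¹ ⟨k, h⟩ : Fin n) : ℕ)
      else word n k σ

theorem word_succ_of_lt {k : ℕ} (h : k < n) (σ : Equiv.Perm (Fin n)) :
    word n (k+1) σ =
      word n k (σ * (prodS n (chunk k ((σ⁻¹ ⟨k, h⟩ : Fin n) : ℕ)))⁻¹)
        ++ chunk k ((σ⁻¹ ⟨k, h⟩ : Fin n) : ℕ) := by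
  simp [word, dif_pos h]

theorem word_succ_of_ge {k : ℕ} (h : ¬ k < n) (σ : Equiv.Perm (Fin n)) :
    word n (k+1) σ = word n k σ := by
  simp [word, dif_neg h]

/-- `σ` fixes all points with index `≥ k`. -/
def FixGe (k : ℕ) (σ : Equiv.Perm (Fin n)) : Prop :=
  ∀ x : Fin n, k ≤ (x : ℕ) → σ x = x

theorem mem_word_lt : ∀ (k : ℕ) (σ : Equiv.Perm (Fin n)) (i : ℕ),
    i ∈ word n k σ → i + 1 < n := by
  intro k
  induction k with
  | zero => intro σ i hi; simp [word] at hi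
  | succ k ih =>
      intro σ i hi
      by_cases h : k < n
      · rw [word_succ_of_lt h] at hi
        rcases List.mem_append.mp hi with hi | hi
        · exact ih _ _ hi
        · have := mem_chunk hi; omega
      · rw [word_succ_of_ge h] at hi
        exact ih _ _ hi

end GroupDev2
section GroupDev3

variable {n N : ℕ}

theorem FixGe_of_ge {k : ℕ} (h : n ≤ k) (σ : Equiv.Perm (Fin n)) : FixGe k σ :=
  fun x hx => absurd x.isLt (by omega)

theorem FixGe_zero {σ : Equiv.Perm (Fin n)} (h : FixGe 0 σ) : σ = 1 :=
  Equiv.ext fun x => h x (Nat.zero_le _)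

theorem FixGe_inv {k : ℕ} {σ : Equiv.Perm (Fin n)} (h : FixGe k σ) : FixGe k σ⁻¹ :=
  fun x hx => by
    have := h x hx
    conv_lhs => rw [← this]
    simp

theorem jval_le {k : ℕ} {σ : Equiv.Perm (Fin n)} (hσ : FixGe (k+1) σ) (h : k < n) :
    ((σ⁻¹ ⟨k, h⟩ : Fin n) : ℕ) ≤ k := by
  by_contra hc
  push_neg at hc
  have h1 : σ (σ⁻¹ ⟨k, h⟩) = σ⁻¹ ⟨k, h⟩ := hσ _ (by omega)
  have h2 : σ (σ⁻¹ ⟨k, h⟩) = ⟨k, h⟩ := by simp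
  rw [h2] at h1
  rw [← h1] at hc
  simp at hc

theorem chunkS_inv_top {k j : ℕ} (h : k < n) (hj : j ≤ k) :
    (prodS n (chunk k j))⁻¹ ⟨k, h⟩ = ⟨j, by omega⟩ := by
  rw [← chunkS_apply_bot h (k - j) j hj rfl]
  simp

theorem FixGe_tau {k : ℕ} {σ : Equiv.Perm (Fin n)} (hσ : FixGe (k+1) σ) (h : k < n) :
    FixGe k (σ * (prodS n (chunk k ((σ⁻¹ ⟨k, h⟩ : Fin n) : ℕ)))⁻¹) := by
  intro x hx
  set j : ℕ := ((σ⁻¹ ⟨k, h⟩ : Fin n) : ℕ) with hj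
  rcases Nat.lt_or_ge k (x : ℕ) with hxk | hxk
  · have hfix : prodS n (chunk k j) x = x := chunkS_fix x (Or.inr hxk)
    have : (prodS n (chunk k j))⁻¹ x = x := by
      conv_lhs => rw [← hfix]
      simp
    rw [Equiv.Perm.mul_apply, this]
    exact hσ x (by omega)
  · have hxeq : x = ⟨k, h⟩ := Fin.ext (by show (x:ℕ) = k; omega)
    subst hxeq
    rw [Equiv.Perm.mul_apply, chunkS_inv_top h (jval_le hσ h)]
    have : (⟨j, by have := jval_le hσ h; omega⟩ : Fin n) = σ⁻¹ ⟨k, h⟩ := Fin.ext rfl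
    rw [this]
    simp

theorem prodS_word {k : ℕ} : ∀ σ : Equiv.Perm (Fin n), FixGe k σ →
    prodS n (word n k σ) = σ := by
  induction k with
  | zero => intro σ hσ; rw [FixGe_zero hσ]; rfl
  | succ k ih =>
      intro σ hσ
      by_cases h : k < n
      · rw [word_succ_of_lt h, prodS_append, ih _ (FixGe_tau hσ h)]
        simp
      · rw [word_succ_of_ge h]
        exact ih σ (FixGe_of_ge (by omega) σ)

theorem word_one : ∀ k, word n k (1 : Equiv.Perm (Fin n)) = [] := by
  intro k
  induction k with
  | zero => rfl
  | succ k ih =>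
      by_cases h : k < n
      · rw [word_succ_of_lt h]
        simp only [inv_one, Equiv.Perm.one_apply, chunk_self, prodS_nil, inv_one, mul_one,
          List.append_nil]
        exact ih
      · rw [word_succ_of_ge h]; exact ih

theorem fin2_eq_fin1_succ (i : ℕ) (hi : i + 1 < n) (hi2 : i + 1 + 1 < n) :
    fin1 (i+1) hi2 = fin2 i hi := rfl

theorem tOp_braid {ε : Bool} (i : ℕ) (hi : i + 1 < n) (hi2 : i + 1 + 1 < n) (f : VV n N) :
    tOp ε i hi (tOp ε (i+1) hi2 (tOp ε i hi f)) =
      tOp ε (i+1) hi2 (tOp ε i hi (tOp ε (i+1) hi2 f)) := by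
  rw [tOp_eq_gOp ε i hi, tOp_eq_gOp ε (i+1) hi2, fin2_eq_fin1_succ i hi hi2]
  exact gOp_braid ε (fin1 i hi) (fin2 i hi) (fin2 (i+1) hi2)
    (by simp [fin1, fin2, Fin.ext_iff])
    (by simp [fin1, fin2, Fin.ext_iff])
    (by simp [fin1, fin2, Fin.ext_iff]; omega) f

theorem Tgen_pos' (ε : Bool) {i : ℕ} (h : i + 1 < n) : Tgen n N ε i = tOp ε i h := dif_pos h

theorem Tgen_neg' (ε : Bool) {i : ℕ} (h : ¬ i + 1 < n) : Tgen n N ε i = 1 := dif_neg h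

theorem Tgen_mul_self (ε : Bool) (i : ℕ) : Tgen n N ε i * Tgen n N ε i = 1 := by
  by_cases h : i + 1 < n
  · rw [Tgen_pos' ε h]
    funext f; exact tOp_invol ε i ‹_› f
  · rw [Tgen_neg' ε h]
    simp

theorem Tgen_comm (ε : Bool) {i j : ℕ} (hij : i + 1 < j) :
    Tgen n N ε i * Tgen n N ε j = Tgen n N ε j * Tgen n N ε i := by
  by_cases hj : j + 1 < n
  · have hi : i + 1 < n := by omega
    rw [Tgen_pos' ε hi, Tgen_pos' ε hj]
    funext f
    exact tOp_comm ε i j hi hj hij f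
  · rw [Tgen_neg' ε hj, mul_one, one_mul]

theorem Tgen_braid (ε : Bool) {i : ℕ} (h : i + 1 + 1 < n) :
    Tgen n N ε i * Tgen n N ε (i+1) * Tgen n N ε i
      = Tgen n N ε (i+1) * Tgen n N ε i * Tgen n N ε (i+1) := by
  have hi : i + 1 < n := by omega
  rw [Tgen_pos' ε hi, Tgen_pos' ε h]
  funext f
  exact tOp_braid i hi h f

theorem Tgen_comm_prodT (ε : Bool) {i : ℕ} {L : List ℕ} (h : ∀ l ∈ L, i + 1 < l) :
    Tgen n N ε i * prodT n N ε L = prodT n N ε L * Tgen n N ε i := by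
  induction L with
  | nil => simp [prodT]
  | cons a L ih =>
      rw [prodT_cons, ← mul_assoc, Tgen_comm ε (h a (List.mem_cons_self)), mul_assoc,
        ih (fun l hl => h l (List.mem_cons_of_mem a hl)), ← mul_assoc]

end GroupDev3
section GroupDev4

variable {n N : ℕ}

theorem Sgen_eq {i : ℕ} (h : i + 1 < n) :
    Sgen n i = Equiv.swap ⟨i, by omega⟩ ⟨i + 1, h⟩ := by
  unfold Sgen; rw [dif_pos h]; rfl

theorem Tgen_comm_prodT' (ε : Bool) {i : ℕ} {L : List ℕ} (h : ∀ l ∈ L, l + 1 < i) :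
    Tgen n N ε i * prodT n N ε L = prodT n N ε L * Tgen n N ε i := by
  induction L with
  | nil => simp [prodT]
  | cons a L ih =>
      rw [prodT_cons, ← mul_assoc, (Tgen_comm ε (h a (List.mem_cons_self))).symm, mul_assoc,
        ih (fun l hl => h l (List.mem_cons_of_mem a hl)), ← mul_assoc]

theorem FixGe_mul_Sgen {k i : ℕ} {σ : Equiv.Perm (Fin n)} (hσ : FixGe (k+1) σ)
    (hik : i + 1 ≤ k) : FixGe (k+1) (σ * Sgen n i) := by
  intro x hx
  rw [Equiv.Perm.mul_apply, Sgen_apply_of_ne i x (by omega) (by omega)]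
  exact hσ x hx

theorem key_lemma (ε : Bool) : ∀ (k : ℕ) (σ : Equiv.Perm (Fin n)), FixGe k σ →
    ∀ (i : ℕ), i + 1 < k →
      prodT n N ε (word n k (σ * Sgen n i)) = prodT n N ε (word n k σ) * Tgen n N ε i := by
  intro k
  induction k with
  | zero => intro σ _ i hi; omega
  | succ k ih =>
      intro σ hσ i hik
      by_cases hn : k < n
      case neg =>
        rw [word_succ_of_ge hn, word_succ_of_ge hn]
        by_cases hi : i + 1 < n
        · exact ih σ (FixGe_of_ge (by omega) σ) i (by omega)
        · have hS : Sgen n i = 1 := by unfold Sgen; rw [dif_neg hi]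
          have hT : Tgen n N ε i = 1 := Tgen_neg' ε hi
          rw [hS, hT, mul_one, mul_one]
      case pos =>
        have hi1n : i + 1 < n := by omega
        have hik' : i + 1 ≤ k := by omega
        set y : Fin n := σ⁻¹ ⟨k, hn⟩ with hy
        have hjk : (y : ℕ) ≤ k := jval_le hσ hn
        set σ' : Equiv.Perm (Fin n) := σ * Sgen n i with hσ'
        have hσ'fix : FixGe (k+1) σ' := FixGe_mul_Sgen hσ hik'
        have hy' : σ'⁻¹ ⟨k, hn⟩ = Sgen n i y := by
          rw [hσ', mul_inv_rev, Sgen_inv, Equiv.Perm.mul_apply, hy]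
        by_cases hji : (y : ℕ) = i
        · -- Case B : j = i
          have hyi : y = ⟨i, by omega⟩ := Fin.ext hji
          have hj' : ((σ'⁻¹ ⟨k, hn⟩ : Fin n) : ℕ) = i + 1 := by
            rw [hy', hyi, Sgen_apply_bot hi1n]
          have hilt : i < k := by omega
          rw [word_succ_of_lt hn σ', word_succ_of_lt hn σ, hj', ← hy, hji,
            chunk_succ_left hilt, prodS_append]
          have hτ : σ' * (prodS n (chunk k (i+1)))⁻¹
              = σ * (prodS n (chunk k (i+1)) * prodS n [i])⁻¹ := by
            rw [hσ', show prodS n [i] = Sgen n i by simp [prodS], mul_inv_rev, Sgen_inv]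
            group
          rw [hτ, prodT_append, prodT_append, prodT_append,
            show prodT n N ε [i] = Tgen n N ε i by simp [prodT]]
          rw [mul_assoc, mul_assoc, Tgen_mul_self ε i, mul_one]
        · by_cases hji1 : (y : ℕ) = i + 1
          · -- Case C : j = i + 1
            have hyi : y = ⟨i + 1, hi1n⟩ := Fin.ext hji1
            have hj' : ((σ'⁻¹ ⟨k, hn⟩ : Fin n) : ℕ) = i := by
              rw [hy', hyi, Sgen_apply_top hi1n (by omega)]
            have hilt : i < k := by omega
            rw [word_succ_of_lt hn σ', word_succ_of_lt hn σ, hj', ← hy, hji1,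
              chunk_succ_left hilt, prodS_append]
            have hτ : σ' * (prodS n (chunk k (i+1)) * prodS n [i])⁻¹
                = σ * (prodS n (chunk k (i+1)))⁻¹ := by
              rw [hσ', show prodS n [i] = Sgen n i by simp [prodS], mul_inv_rev, Sgen_inv,
                ← mul_assoc, mul_assoc σ, Sgen_mul_self, mul_one]
            rw [hτ, prodT_append, prodT_append, prodT_append,
              show prodT n N ε [i] = Tgen n N ε i by simp [prodT]]
            rw [mul_assoc]
          · -- Case A : j ∉ {i, i+1}
            have hj' : σ'⁻¹ ⟨k, hn⟩ = y := by
              rw [hy', Sgen_apply_of_ne i y hji hji1]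
            rw [word_succ_of_lt hn σ', word_succ_of_lt hn σ, hj', ← hy]
            set α : Equiv.Perm (Fin n) := prodS n (chunk k (y : ℕ)) with hα
            set τ : Equiv.Perm (Fin n) := σ * α⁻¹ with hτdef
            have hτfix : FixGe k τ := by
              have := FixGe_tau hσ hn
              rwa [← hy, ← hα, ← hτdef] at this
            have hconj : ∀ (a b : Fin n), Sgen n i = Equiv.swap a b →
                σ' * α⁻¹ = τ * Equiv.swap (α a) (α b) := by
              intro a b hab
              rw [Equiv.swap_apply_apply, hσ', hab, hτdef]
              group
            rcases Nat.lt_or_ge (i+1) (y : ℕ) with hlt | hge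
            · -- A1 : i + 1 < j
              have hfix1 : α ⟨i, by omega⟩ = ⟨i, by omega⟩ :=
                chunkS_fix _ (Or.inl (by simpa using by omega))
              have hfix2 : α ⟨i + 1, hi1n⟩ = ⟨i + 1, hi1n⟩ :=
                chunkS_fix _ (Or.inl (by simpa using by omega))
              have hconj' : σ' * α⁻¹ = τ * Sgen n i := by
                rw [hconj _ _ (Sgen_eq hi1n), hfix1, hfix2, ← Sgen_eq hi1n]
              rw [hconj', prodT_append, prodT_append, ih τ hτfix i (by omega),
                mul_assoc, mul_assoc,
                Tgen_comm_prodT ε (fun l hl => by have := mem_chunk hl; omega)]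
            · -- A2 : j < i
              have hyi : (y : ℕ) < i := by omega
              obtain ⟨p, rfl⟩ : ∃ p, i = p + 1 := ⟨i - 1, by omega⟩
              have happ1 : α ⟨p + 1, by omega⟩ = ⟨p, by omega⟩ :=
                chunkS_apply_mid hn (by omega) (by omega)
              have happ2 : α ⟨p + 1 + 1, hi1n⟩ = ⟨p + 1, by omega⟩ := by
                have := chunkS_apply_mid (n := n) (k := k) (j := (y:ℕ)) (m := p + 1)
                  hn (by omega) (by omega)
                convert this using 2
              have hconj' : σ' * α⁻¹ = τ * Sgen n p := by
                rw [hconj _ _ (Sgen_eq hi1n), happ1, happ2, ← Sgen_eq (show p + 1 < n by omega)]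
              have hdec : chunk k (y : ℕ)
                  = chunk k (p+2) ++ ((p+1) :: (p :: chunk p (y : ℕ))) := by
                rw [chunk_split (show (y:ℕ) ≤ p + 2 by omega) (show p + 2 ≤ k by omega),
                  chunk_top (show (y:ℕ) ≤ p + 1 by omega),
                  chunk_top (show (y:ℕ) ≤ p by omega)]
              rw [hconj', prodT_append, prodT_append, ih τ hτfix p (by omega), hdec,
                prodT_append, prodT_cons, prodT_cons]
              have haux : Tgen n N ε p *
                  (prodT n N ε (chunk k (p+2)) * (Tgen n N ε (p+1) *
                    (Tgen n N ε p * prodT n N ε (chunk p (y:ℕ)))))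
                  = (prodT n N ε (chunk k (p+2)) * (Tgen n N ε (p+1) *
                    (Tgen n N ε p * prodT n N ε (chunk p (y:ℕ))))) * Tgen n N ε (p+1) := by
                have hbr := Tgen_braid (n := n) (N := N) ε (i := p) (show p + 1 + 1 < n from hi1n)
                have hcd := Tgen_comm_prodT' (n := n) (N := N) ε (i := p + 1)
                  (L := chunk p (y:ℕ)) (fun l hl => by have := mem_chunk hl; omega)
                have hinner : Tgen n N ε p * (Tgen n N ε (p+1) *
                      (Tgen n N ε p * prodT n N ε (chunk p (y:ℕ))))
                    = (Tgen n N ε (p+1) * (Tgen n N ε p * prodT n N ε (chunk p (y:ℕ))))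
                        * Tgen n N ε (p+1) := by
                  calc Tgen n N ε p * (Tgen n N ε (p+1) *
                          (Tgen n N ε p * prodT n N ε (chunk p (y:ℕ))))
                      = (Tgen n N ε p * Tgen n N ε (p+1) * Tgen n N ε p)
                          * prodT n N ε (chunk p (y:ℕ)) := by
                        rw [mul_assoc, mul_assoc]
                    _ = (Tgen n N ε (p+1) * Tgen n N ε p * Tgen n N ε (p+1))
                          * prodT n N ε (chunk p (y:ℕ)) := by rw [hbr]
                    _ = Tgen n N ε (p+1) * (Tgen n N ε p *
                          (Tgen n N ε (p+1) * prodT n N ε (chunk p (y:ℕ)))) := by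
                        rw [mul_assoc, mul_assoc]
                    _ = Tgen n N ε (p+1) * (Tgen n N ε p *
                          (prodT n N ε (chunk p (y:ℕ)) * Tgen n N ε (p+1))) := by rw [hcd]
                    _ = (Tgen n N ε (p+1) * (Tgen n N ε p * prodT n N ε (chunk p (y:ℕ))))
                          * Tgen n N ε (p+1) := by
                        rw [mul_assoc, mul_assoc]
                rw [← mul_assoc,
                  Tgen_comm_prodT ε (fun l hl => by have := mem_chunk hl; omega),
                  mul_assoc, hinner, ← mul_assoc]
              rw [mul_assoc, haux, ← mul_assoc]

end GroupDev4
section Assembly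

variable {n N : ℕ}

theorem FixGe_n (σ : Equiv.Perm (Fin n)) : FixGe n σ :=
  fun x hx => absurd x.isLt (by omega)

theorem rho_aux (ε : Bool) : ∀ (l : List ℕ), (∀ i ∈ l, i + 1 < n) →
    ∀ σ : Equiv.Perm (Fin n),
      prodT n N ε (word n n (σ * prodS n l))
        = prodT n N ε (word n n σ) * prodT n N ε l := by
  intro l
  induction l with
  | nil => intro _ σ; simp [prodS_nil, prodT, mul_one]
  | cons a l ih =>
      intro hl σ
      rw [prodS_cons, ← mul_assoc, ih (fun i hi => hl i (List.mem_cons_of_mem a hi)) (σ * Sgen n a),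
        key_lemma ε n σ (FixGe_n σ) a (hl a (List.mem_cons_self)), prodT_cons,
        mul_assoc]

/-- The action of `Sₙ`. -/
def rho (n N : ℕ) (ε : Bool) : Equiv.Perm (Fin n) →* Function.End (VV n N) where
  toFun σ := prodT n N ε (word n n σ)
  map_one' := by
    show prodT n N ε (word n n 1) = 1
    rw [word_one]; rfl
  map_mul' σ τ := by
    show prodT n N ε (word n n (σ * τ))
      = prodT n N ε (word n n σ) * prodT n N ε (word n n τ)
    have h1 : σ * τ = σ * prodS n (word n n τ) := by rw [prodS_word τ (FixGe_n τ)]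
    rw [h1, rho_aux ε (word n n τ) (fun i hi => mem_word_lt n τ i hi) σ]

theorem rho_apply_swap (ε : Bool) (i : ℕ) (hi : i + 1 < n) :
    rho n N ε (Equiv.swap (fin1 i hi) (fin2 i hi)) = tOp ε i hi := by
  have h1 : Equiv.swap (fin1 i hi) (fin2 i hi) = Sgen n i := by
    unfold Sgen; rw [dif_pos hi]
  have h2 : Sgen n i = (1 : Equiv.Perm (Fin n)) * prodS n [i] := by simp [prodS]
  have h3 : rho n N ε (Sgen n i) = prodT n N ε (word n n ((1 : Equiv.Perm (Fin n)) * prodS n [i])) := by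
    rw [← h2]; rfl
  rw [h1, h3, rho_aux ε [i] (by simpa using hi) 1, word_one]
  show (1 : Function.End (VV n N)) * prodT n N ε [i] = _
  rw [one_mul]
  show Tgen n N ε i * 1 = _
  rw [mul_one]
  rw [Tgen_pos' ε hi]

end Assembly

/-- For each choice of sign, the assignment `s_i ↦ ŝ̃_i^±` defines an action
of `S_n` on `V ⊗ ℂ(z_1,…,z_n,h)`; that is, the operators `ŝ̃_i^±` satisfy the Coxeter
relations of the symmetric group. -/
theorem statement1 (n N : ℕ) (ε : Bool) :
    (∀ (i : ℕ) (hi : i + 1 < n) (f : VV n N), tOp ε i hi (tOp ε i hi f) = f) ∧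
    (∀ (i j : ℕ) (hi : i + 1 < n) (hj : j + 1 < n), i + 1 < j →
      ∀ f : VV n N, tOp ε i hi (tOp ε j hj f) = tOp ε j hj (tOp ε i hi f)) ∧
    (∀ (i : ℕ) (hi : i + 1 < n) (hi2 : i + 1 + 1 < n) (f : VV n N),
      tOp ε i hi (tOp ε (i+1) hi2 (tOp ε i hi f)) =
        tOp ε (i+1) hi2 (tOp ε i hi (tOp ε (i+1) hi2 f))) ∧
    (∃ ρ : Equiv.Perm (Fin n) →* Function.End (VV n N),
      ∀ (i : ℕ) (hi : i + 1 < n),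
        ρ (Equiv.swap (fin1 i hi) (fin2 i hi)) = tOp ε i hi) := by
  refine ⟨fun i hi f => tOp_invol ε i hi f,
    fun i j hi hj hij f => tOp_comm ε i j hi hj hij f,
    fun i hi hi2 f => tOp_braid i hi hi2 f,
    ⟨rho n N ε, fun i hi => rho_apply_swap ε i hi⟩⟩

end GRTV
end
end

section
/- Let N = n and consider the operators Y_1^+,…,Y_n^+ and G_{1,2},…,G_{n−1,n} on V_{(1,…,1)} ⊗ ℂ[z_1,…,z_n,h]. Then the assignments y_i ↦ Y_i^+, c ↦ multiplication by h, σ_j ↦ G_{j,j+1} define a representation of the degenerate affine Hecke algebra 𝔥_n; that is: the operators Y_i^+ pairwise commute, the operators G_{j,j+1} satisfy the Coxeter relations of S_n on V_{(1,…,1)} ⊗ ℂ[z_1,…,z_n,h], G_{i,i+1} Y_i^+ − Y_{i+1}^+ G_{i,i+1} = h·id, and G_{i,i+1} Y_j^+ = Y_j^+ G_{i,i+1} for j ≠ i, i+1. Similarly, the assignments y_i ↦ Y_i^−, c ↦ multiplication by −h, σ_j ↦ −G_{j,j+1} define a representation of 𝔥_n: the Y_i^− pairwise commute, (−G_{i,i+1})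 Y_i^− − Y_{i+1}^− (−G_{i,i+1}) = −h·id, and G_{i,i+1} Y_j^− = Y_j^− G_{i,i+1} for j ≠ i, i+1. -/
open scoped BigOperators

noncomputable section

namespace GRTV

/-- The polynomial ring `ℂ[z_1,…,z_n,h]`. -/
abbrev A (n : ℕ) : Type := MvPolynomial (Fin n ⊕ Unit) ℂ

def zp {n : ℕ} (a : Fin n) : A n := MvPolynomial.X (Sum.inl a)
def hp {n : ℕ} : A n := MvPolynomial.X (Sum.inr ())

/-- `V ⊗ ℂ[z_1,…,z_n,h]` (with `V = (ℂ^n)^{⊗n}`) in coordinates. -/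
abbrev MV (n : ℕ) : Type := (Fin n → Fin n) → A n

/-- The action of `e^{(a)}_{i,j}` (acting in the `a`-th tensor factor) in coordinates. -/
def Ea {n : ℕ} (a : Fin n) (i j : Fin n) (c : MV n) : MV n :=
  fun m => if m a = i then c (Function.update m a j) else 0

/-- The diagonal action of `e_{i,j} = e^{(1)}_{i,j}+⋯+e^{(n)}_{i,j}`. -/
def Eop {n : ℕ} (i j : Fin n) (c : MV n) : MV n :=
  fun m => ∑ a : Fin n, Ea a i j c m

/-- `G_{i,j} = e_{i,j} e_{j,i} − e_{i,i}`. -/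
def Gop {n : ℕ} (i j : Fin n) (c : MV n) : MV n :=
  fun m => Eop i j (Eop j i c) m - Eop i i c m

/-- The dynamical Hamiltonian `Y_i^±` (`ε = true` for `+`, `ε = false` for `−`):
`Y_i^± = Σ_a z_a e^{(a)}_{i,i} + (h/2)(e_{i,i} − e_{i,i}²)
  + h Σ_{j=1}^n Σ_{a<b (resp. b<a)} e^{(a)}_{i,j} e^{(b)}_{j,i} − h Σ_{j<i} G_{i,j}`. -/
def Yop {n : ℕ} (ε : Bool) (i : Fin n) (c : MV n) : MV n :=
  fun m =>
    (∑ a : Fin n, zp a * Ea a i i c m)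
    + MvPolynomial.C (1/2 : ℂ) * hp * (Eop i i c m - Eop i i (Eop i i c) m)
    + hp * (if ε then
        ∑ j : Fin n, ∑ p ∈ Finset.univ.filter (fun p : Fin n × Fin n => p.1 < p.2),
          Ea p.1 i j (Ea p.2 j i c) m
      else
        ∑ j : Fin n, ∑ p ∈ Finset.univ.filter (fun p : Fin n × Fin n => p.2 < p.1),
          Ea p.1 i j (Ea p.2 j i c) m)
    - hp * (∑ j ∈ Finset.univ.filter (fun j : Fin n => j < i), Gop i j c m)

/-- Membership in `V_{(1,…,1)} ⊗ ℂ[z,h]`: support on bijective words. -/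
def wsupp {n : ℕ} (c : MV n) : Prop :=
  ∀ m : Fin n → Fin n, ¬ Function.Bijective m → c m = 0

/-! ### Helpers on swaps -/

section Swaps
variable {α : Type*} [DecidableEq α]

lemma swap_mul_symm_apply (σ : Equiv.Perm α) (a b x : α) :
    (Equiv.swap a b * σ).symm x = σ.symm (Equiv.swap a b x) := by
  rw [Equiv.Perm.mul_def, Equiv.symm_trans_apply, Equiv.symm_swap]

/-- the 3-cycle `a → b → c → a` in three guises -/
lemma swap_cycle₁ (a b c : α) (hab : a ≠ b) (hac : a ≠ c) (hbc : b ≠ c) :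
    Equiv.swap a b * Equiv.swap b c = Equiv.swap b c * Equiv.swap a c := by
  ext x
  simp only [Equiv.Perm.mul_apply, Equiv.swap_apply_def]
  split_ifs <;> simp_all <;> tauto

lemma swap_cycle₂ (a b c : α) (hab : a ≠ b) (hac : a ≠ c) (hbc : b ≠ c) :
    Equiv.swap a b * Equiv.swap b c = Equiv.swap a c * Equiv.swap b a := by
  ext x
  simp only [Equiv.Perm.mul_apply, Equiv.swap_apply_def]
  split_ifs <;> simp_all <;> tauto

lemma swap_disjoint_comm (a b c d : α) (hac : a ≠ c) (had : a ≠ d) (hbc : b ≠ c) (hbd : b ≠ d) :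
    Equiv.swap a b * Equiv.swap c d = Equiv.swap c d * Equiv.swap a b := by
  ext x
  simp only [Equiv.Perm.mul_apply, Equiv.swap_apply_def]
  split_ifs <;> simp_all <;> tauto

lemma swap_braid (a b c : α) (hab : a ≠ b) (hac : a ≠ c) (hbc : b ≠ c) :
    Equiv.swap a b * Equiv.swap b c * Equiv.swap a b
      = Equiv.swap b c * Equiv.swap a b * Equiv.swap b c := by
  rw [swap_cycle₁ a b c hab hac hbc, mul_assoc, mul_assoc,
    swap_cycle₂ a b c hab hac hbc, Equiv.swap_comm b a]

end Swaps

/-! ### The coefficient `γ` and its combinatorial identities -/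

def γ {n : ℕ} (ε : Bool) (i : Fin n) (σ : Equiv.Perm (Fin n)) (j : Fin n) : ℤ :=
  (if (if ε then σ.symm i < σ.symm j else σ.symm j < σ.symm i) then 1 else 0)
    - (if j < i then 1 else 0)

def II (b : Bool) : ℤ := if b then 1 else 0

lemma ite_eq_II (P : Prop) [Decidable P] : (if P then (1:ℤ) else 0) = II (decide P) := by
  by_cases h : P <;> simp [h, II]

lemma ite_eq_II' {α : Type*} [LinearOrder α] (a b : α) (h : a ≠ b) :
    (if b < a then (1:ℤ) else 0) = 1 - II (decide (a < b)) := by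
  rcases h.lt_or_gt with h' | h'
  · rw [if_neg (asymm h'), decide_eq_true h']; simp [II]
  · rw [if_pos h', decide_eq_false (asymm h')]; simp [II]

lemma keyT : ∀ A B C u v w : Bool,
    (C = true → B = true → A = true) → (C = false → A = true → B = true) →
    (v = true → w = true → u = true) → (v = false → u = true → w = true) →
    (II A - II u) * (II B - (1 - II w)) + (II C - II w) * (II A - II v)
      = (II B - II v) * (II C - II u) := by decide

lemma keyF : ∀ A B C u v w : Bool,
    (C = true → B = true → A = true) → (C = false → A = true → B = true) →
    (v = true → w = true → u = true) → (v = false → u = true → w = true) →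
    ((1 - II A) - II u) * ((1 - II B) - (1 - II w)) + ((1 - II C) - II w) * ((1 - II A) - II v)
      = ((1 - II B) - II v) * ((1 - II C) - II u) := by decide

lemma keyP : ∀ C w : Bool, (II C - II w) * (II C - (1 - II w)) = 0 := by decide

lemma keyP' : ∀ C w : Bool, ((1 - II C) - II w) * ((1 - II C) - (1 - II w)) = 0 := by decide

variable {n : ℕ}

lemma γ_self (ε : Bool) (i : Fin n) (σ : Equiv.Perm (Fin n)) : γ ε i σ i = 0 := by
  cases ε <;> simp [γ]

lemma γ_add (ε : Bool) (i k : Fin n) (σ : Equiv.Perm (Fin n)) (hik : i ≠ k) :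
    γ ε i σ k + γ ε k σ i = 0 := by
  have h1 : σ.symm i ≠ σ.symm k := fun h => hik (σ.symm.injective h)
  cases ε <;>
  · simp only [γ, if_true, if_false, Bool.false_eq_true]
    rcases h1.lt_or_gt with h | h <;> rcases hik.lt_or_gt with h' | h' <;>
      simp [h, h', asymm h, asymm h']

lemma γ_swap_inv (ε : Bool) (a b i' j' : Fin n) (σ : Equiv.Perm (Fin n))
    (h1 : a ≠ i') (h2 : a ≠ j') (h3 : b ≠ i') (h4 : b ≠ j') :
    γ ε a (Equiv.swap i' j' * σ) b = γ ε a σ b := by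
  simp [γ, swap_mul_symm_apply, Equiv.swap_apply_of_ne_of_ne, h1, h2, h3, h4]

lemma γ_prod_zero (ε : Bool) (i k : Fin n) (σ : Equiv.Perm (Fin n)) (hik : i ≠ k) :
    γ ε i σ k * γ ε k (Equiv.swap i k * σ) i = 0 := by
  have hx : σ.symm i ≠ σ.symm k := fun h => hik (σ.symm.injective h)
  cases ε
  · simp only [γ, swap_mul_symm_apply, Equiv.swap_apply_left, Equiv.swap_apply_right,
      Bool.false_eq_true, if_false]
    rw [ite_eq_II' (σ.symm i) (σ.symm k) hx, ite_eq_II' k i hik.symm, ite_eq_II (k < i)]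
    exact keyP' (decide (σ.symm i < σ.symm k)) (decide (k < i))
  · simp only [γ, swap_mul_symm_apply, Equiv.swap_apply_left, Equiv.swap_apply_right, if_true]
    rw [ite_eq_II' k i hik.symm, ite_eq_II (σ.symm i < σ.symm k), ite_eq_II (k < i)]
    exact keyP (decide (σ.symm i < σ.symm k)) (decide (k < i))

lemma key_coef (ε : Bool) (i k r : Fin n) (σ : Equiv.Perm (Fin n))
    (hik : i ≠ k) (hir : i ≠ r) (hkr : k ≠ r) :
    γ ε i σ r * γ ε k (Equiv.swap i r * σ) i + γ ε i σ k * γ ε k (Equiv.swap i k * σ) r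
      = γ ε k σ r * γ ε i (Equiv.swap k r * σ) r := by
  have hxz : σ.symm i ≠ σ.symm r := fun h => hir (σ.symm.injective h)
  have hxy : σ.symm i ≠ σ.symm k := fun h => hik (σ.symm.injective h)
  have hyz : σ.symm k ≠ σ.symm r := fun h => hkr (σ.symm.injective h)
  have cABC1 : decide (σ.symm i < σ.symm k) = true → decide (σ.symm k < σ.symm r) = true →
      decide (σ.symm i < σ.symm r) = true := fun h1 h2 =>
    decide_eq_true ((of_decide_eq_true h1).trans (of_decide_eq_true h2))
  have cABC2 : decide (σ.symm i < σ.symm k) = false → decide (σ.symm i < σ.symm r) = true →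
      decide (σ.symm k < σ.symm r) = true := fun h1 h2 =>
    decide_eq_true (lt_of_le_of_lt (le_of_not_gt (of_decide_eq_false h1)) (of_decide_eq_true h2))
  have cuvw1 : decide (r < k) = true → decide (k < i) = true → decide (r < i) = true :=
    fun h1 h2 => decide_eq_true ((of_decide_eq_true h1).trans (of_decide_eq_true h2))
  have cuvw2 : decide (r < k) = false → decide (r < i) = true → decide (k < i) = true :=
    fun h1 h2 =>
    decide_eq_true (lt_of_le_of_lt (le_of_not_gt (of_decide_eq_false h1)) (of_decide_eq_true h2))
  cases ε
  · simp only [γ, swap_mul_symm_apply, Equiv.swap_apply_left, Equiv.swap_apply_right,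
      Equiv.swap_apply_of_ne_of_ne hik.symm hkr,
      Equiv.swap_apply_of_ne_of_ne hir.symm hkr.symm,
      Equiv.swap_apply_of_ne_of_ne hik hir,
      Bool.false_eq_true, if_false]
    rw [ite_eq_II' (σ.symm i) (σ.symm r) hxz, ite_eq_II' (σ.symm i) (σ.symm k) hxy,
      ite_eq_II' (σ.symm k) (σ.symm r) hyz, ite_eq_II' k i hik.symm,
      ite_eq_II (r < i), ite_eq_II (r < k), ite_eq_II (k < i)]
    exact keyF _ _ _ _ _ _ cABC1 cABC2 cuvw1 cuvw2
  · simp only [γ, swap_mul_symm_apply, Equiv.swap_apply_left, Equiv.swap_apply_right,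
      Equiv.swap_apply_of_ne_of_ne hik.symm hkr,
      Equiv.swap_apply_of_ne_of_ne hir.symm hkr.symm,
      Equiv.swap_apply_of_ne_of_ne hik hir,
      if_true]
    rw [ite_eq_II' k i hik.symm,
      ite_eq_II (σ.symm i < σ.symm r), ite_eq_II (σ.symm i < σ.symm k),
      ite_eq_II (σ.symm k < σ.symm r), ite_eq_II (r < i), ite_eq_II (r < k), ite_eq_II (k < i)]
    exact keyT _ _ _ _ _ _ cABC1 cABC2 cuvw1 cuvw2

/-! ### Operators on the permutation model -/

abbrev W (n : ℕ) : Type := Equiv.Perm (Fin n) → A n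

def Rmap (c : MV n) : W n := fun σ => c ⇑σ

def GW (i j : Fin n) (f : W n) : W n := fun σ => f (Equiv.swap i j * σ)

def cγ (ε : Bool) (i : Fin n) (σ : Equiv.Perm (Fin n)) (j : Fin n) : A n :=
  ((γ ε i σ j : ℤ) : A n)

lemma cγ_swap_inv (ε : Bool) (a b i' j' : Fin n) (σ : Equiv.Perm (Fin n))
    (h1 : a ≠ i') (h2 : a ≠ j') (h3 : b ≠ i') (h4 : b ≠ j') :
    cγ ε a (Equiv.swap i' j' * σ) b = cγ ε a σ b := by
  rw [cγ, γ_swap_inv ε a b i' j' σ h1 h2 h3 h4, cγ]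

def YW (ε : Bool) (i : Fin n) (f : W n) : W n := fun σ =>
  zp (σ.symm i) * f σ
    + hp * ∑ j : Fin n, cγ ε i σ j * f (Equiv.swap i j * σ)

def FF (ε : Bool) (f : W n) (σ : Equiv.Perm (Fin n)) (i k j l : Fin n) : A n :=
  cγ ε i σ j * cγ ε k (Equiv.swap i j * σ) l * f (Equiv.swap k l * (Equiv.swap i j * σ))

lemma cγ_self (ε : Bool) (i : Fin n) (σ : Equiv.Perm (Fin n)) : cγ ε i σ i = 0 := by
  simp [cγ, γ_self]

lemma key_term (ε : Bool) (f : W n) (σ : Equiv.Perm (Fin n)) (i k r : Fin n)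
    (hik : i ≠ k) (hir : i ≠ r) (hkr : k ≠ r) :
    FF ε f σ i k r i + FF ε f σ i k k r = FF ε f σ k i r r := by
  have hp2 : Equiv.swap k r * (Equiv.swap i k * σ) = Equiv.swap k i * (Equiv.swap i r * σ) := by
    rw [← mul_assoc, ← mul_assoc, ← swap_cycle₂ k i r hik.symm hkr hir]
  have hp3 : Equiv.swap i r * (Equiv.swap k r * σ) = Equiv.swap k i * (Equiv.swap i r * σ) := by
    rw [← mul_assoc, ← mul_assoc, ← swap_cycle₁ k i r hik.symm hkr hir]
  simp only [FF, hp2, hp3]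
  rw [← add_mul]
  congr 1
  have := key_coef ε i k r σ hik hir hkr
  simp only [cγ]
  exact_mod_cast congrArg (fun z : ℤ => ((z : ℤ) : A n)) this

def oset (i k : Fin n) : Finset (Fin n) := Finset.univ.filter (fun r => r ≠ i ∧ r ≠ k)

def iset (i k j : Fin n) : Finset (Fin n) :=
  Finset.univ.filter (fun l => l ≠ i ∧ l ≠ k ∧ l ≠ j)

lemma oset_comm (i k : Fin n) : oset i k = oset k i := by
  ext x; simp [oset]; tauto

lemma Mdecomp (ε : Bool) (f : W n) (σ : Equiv.Perm (Fin n)) (i k : Fin n) (hik : i ≠ k) :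
    ∑ j : Fin n, ∑ l : Fin n, FF ε f σ i k j l
      = (∑ p ∈ (oset i k).sigma (fun j => iset i k j), FF ε f σ i k p.1 p.2)
        + ∑ r ∈ oset i k, (FF ε f σ i k r r + FF ε f σ i k r i + FF ε f σ i k k r) := by
  have hcompl : Finset.univ.filter (fun j : Fin n => ¬(j ≠ i ∧ j ≠ k)) = {i, k} := by
    ext x; simp [not_and_or, or_comm]; tauto
  rw [← Finset.sum_filter_add_sum_filter_not Finset.univ (fun j => j ≠ i ∧ j ≠ k)
    (fun j => ∑ l : Fin n, FF ε f σ i k j l), hcompl, Finset.sum_pair hik]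
  have rowi : ∑ l : Fin n, FF ε f σ i k i l = 0 :=
    Finset.sum_eq_zero fun l _ => by simp [FF, cγ_self]
  have rowk : ∑ l : Fin n, FF ε f σ i k k l = ∑ r ∈ oset i k, FF ε f σ i k k r := by
    rw [← Finset.sum_filter_add_sum_filter_not Finset.univ (fun l => l ≠ i ∧ l ≠ k)
      (fun l => FF ε f σ i k k l), hcompl, Finset.sum_pair hik]
    have h1 : FF ε f σ i k k i = 0 := by
      simp only [FF, cγ, ← Int.cast_mul, ← mul_assoc]
      rw [γ_prod_zero ε i k σ hik]
      simp
    have h2 : FF ε f σ i k k k = 0 := by simp [FF, cγ_self]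
    rw [h1, h2, oset]
    ring
  have rowj : ∀ j ∈ oset i k, ∑ l : Fin n, FF ε f σ i k j l
      = (∑ l ∈ iset i k j, FF ε f σ i k j l) + (FF ε f σ i k j i + FF ε f σ i k j j) := by
    intro j hj
    simp only [oset, Finset.mem_filter] at hj
    obtain ⟨-, hji, hjk⟩ := hj
    have hcompl3 : Finset.univ.filter (fun l : Fin n => ¬(l ≠ i ∧ l ≠ k ∧ l ≠ j))
        = {i, k, j} := by
      ext x; simp [not_and_or]; tauto
    rw [← Finset.sum_filter_add_sum_filter_not Finset.univ (fun l => l ≠ i ∧ l ≠ k ∧ l ≠ j)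
      (fun l => FF ε f σ i k j l), hcompl3]
    rw [Finset.sum_insert (by simp [hik, hji.symm]), Finset.sum_insert (by simp [hjk.symm]),
      Finset.sum_singleton]
    have h2 : FF ε f σ i k j k = 0 := by simp [FF, cγ_self]
    rw [h2, iset]
    ring
  have hfold : Finset.univ.filter (fun j : Fin n => j ≠ i ∧ j ≠ k) = oset i k := rfl
  rw [hfold, Finset.sum_congr rfl rowj, Finset.sum_add_distrib, Finset.sum_add_distrib,
    ← Finset.sum_sigma (oset i k) (fun j => iset i k j) (fun p => FF ε f σ i k p.1 p.2),
    rowi, rowk, zero_add]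
  rw [add_assoc, ← Finset.sum_add_distrib, ← Finset.sum_add_distrib]
  refine congrArg (_ + ·) (Finset.sum_congr rfl fun x _ => by ring)

lemma Msym (ε : Bool) (f : W n) (σ : Equiv.Perm (Fin n)) (i k : Fin n) (hik : i ≠ k) :
    ∑ j : Fin n, ∑ l : Fin n, FF ε f σ i k j l = ∑ j : Fin n, ∑ l : Fin n, FF ε f σ k i j l := by
  rw [Mdecomp ε f σ i k hik, Mdecomp ε f σ k i hik.symm]
  refine congrArg₂ (· + ·) ?_ ?_
  · -- the "disjoint indices" part
    refine Finset.sum_nbij' (fun p => ⟨p.2, p.1⟩) (fun p => ⟨p.2, p.1⟩) ?_ ?_ ?_ ?_ ?_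
    · rintro ⟨j, l⟩ hm
      simp only [Finset.mem_sigma, oset, iset, Finset.mem_filter, Finset.mem_univ,
        true_and] at hm ⊢
      exact ⟨⟨hm.2.2.1, hm.2.1⟩, hm.1.2, hm.1.1, fun h => hm.2.2.2 h.symm⟩
    · rintro ⟨j, l⟩ hm
      simp only [Finset.mem_sigma, oset, iset, Finset.mem_filter, Finset.mem_univ,
        true_and] at hm ⊢
      exact ⟨⟨hm.2.2.1, hm.2.1⟩, hm.1.2, hm.1.1, fun h => hm.2.2.2 h.symm⟩
    · rintro ⟨j, l⟩ _; rfl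
    · rintro ⟨j, l⟩ _; rfl
    · rintro ⟨j, l⟩ hm
      simp only [Finset.mem_sigma, oset, iset, Finset.mem_filter, Finset.mem_univ,
        true_and] at hm
      obtain ⟨⟨hji, hjk⟩, hli, hlk, hlj⟩ := hm
      show FF ε f σ i k j l = FF ε f σ k i l j
      simp only [FF]
      rw [cγ_swap_inv ε k l i j σ (Ne.symm hik) (Ne.symm hjk) hli hlj,
        cγ_swap_inv ε i j k l σ hik (Ne.symm hli) hjk (Ne.symm hlj),
        ← mul_assoc (Equiv.swap k l), swap_disjoint_comm k l i j (Ne.symm hik) (Ne.symm hjk) hli hlj,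
        mul_assoc (Equiv.swap i j) (Equiv.swap k l) σ]
      ring
  · -- the "three distinct indices" part
    rw [oset_comm i k]
    refine Finset.sum_congr rfl fun r hr => ?_
    simp only [oset, Finset.mem_filter, Finset.mem_univ, true_and] at hr
    obtain ⟨hrk, hri⟩ := hr
    rw [add_assoc, key_term ε f σ i k r hik (Ne.symm hri) (Ne.symm hrk),
      add_assoc, key_term ε f σ k i r hik.symm (Ne.symm hrk) (Ne.symm hri)]
    ring

lemma YW_comm (ε : Bool) (i k : Fin n) (f : W n) :
    YW ε i (YW ε k f) = YW ε k (YW ε i f) := by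
  rcases eq_or_ne i k with rfl | hik
  · rfl
  funext σ
  have expand : ∀ a b : Fin n, a ≠ b → YW ε a (YW ε b f) σ
      = zp (σ.symm a) * (zp (σ.symm b) * f σ)
        + hp * (zp (σ.symm a) * ∑ l : Fin n, cγ ε b σ l * f (Equiv.swap b l * σ))
        + hp * (∑ j : Fin n, cγ ε a σ j * zp (σ.symm (Equiv.swap a j b)) * f (Equiv.swap a j * σ))
        + hp * hp * ∑ j : Fin n, ∑ l : Fin n, FF ε f σ a b j l := by
    intro a b hab
    simp only [YW, swap_mul_symm_apply, mul_add, Finset.sum_add_distrib]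
    have e1 : ∀ j : Fin n, cγ ε a σ j
        * (hp * ∑ l : Fin n, cγ ε b (Equiv.swap a j * σ) l
            * f (Equiv.swap b l * (Equiv.swap a j * σ)))
        = hp * ∑ l : Fin n, FF ε f σ a b j l := fun j => by
      rw [mul_left_comm, Finset.mul_sum]
      refine congrArg (hp * ·) (Finset.sum_congr rfl fun l _ => ?_)
      simp only [FF]
      ring
    rw [show (∑ j : Fin n, cγ ε a σ j
        * (hp * ∑ l : Fin n, cγ ε b (Equiv.swap a j * σ) l
            * f (Equiv.swap b l * (Equiv.swap a j * σ))))
        = hp * ∑ j : Fin n, ∑ l : Fin n, FF ε f σ a b j l by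
      rw [Finset.sum_congr rfl fun j _ => e1 j, ← Finset.mul_sum]]
    rw [show (∑ j : Fin n, cγ ε a σ j
        * (zp (σ.symm (Equiv.swap a j b)) * f (Equiv.swap a j * σ)))
        = ∑ j : Fin n, cγ ε a σ j * zp (σ.symm (Equiv.swap a j b)) * f (Equiv.swap a j * σ) from
      Finset.sum_congr rfl fun j _ => by rw [mul_assoc]]
    ring
  rw [expand i k hik, expand k i hik.symm]
  have hγc : cγ ε i σ k + cγ ε k σ i = 0 := by
    have := γ_add ε i k σ hik
    simp only [cγ, ← Int.cast_add, this, Int.cast_zero]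
  have hz : ∀ a b : Fin n, a ≠ b →
      (∑ j : Fin n, cγ ε a σ j * zp (σ.symm (Equiv.swap a j b)) * f (Equiv.swap a j * σ))
      = zp (σ.symm b) * (∑ j : Fin n, cγ ε a σ j * f (Equiv.swap a j * σ))
        + cγ ε a σ b * (zp (σ.symm a) - zp (σ.symm b)) * f (Equiv.swap a b * σ) := by
    intro a b hab
    have e2 : ∀ j : Fin n, cγ ε a σ j * zp (σ.symm (Equiv.swap a j b)) * f (Equiv.swap a j * σ)
        = zp (σ.symm b) * (cγ ε a σ j * f (Equiv.swap a j * σ))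
          + (if j = b then cγ ε a σ b * (zp (σ.symm a) - zp (σ.symm b)) * f (Equiv.swap a b * σ)
             else 0) := by
      intro j
      rcases eq_or_ne j b with rfl | hjb
      · rw [if_pos rfl, Equiv.swap_apply_right]
        ring
      · rw [if_neg hjb, Equiv.swap_apply_of_ne_of_ne hab.symm hjb.symm, add_zero]
        ring
    rw [Finset.sum_congr rfl fun j _ => e2 j, Finset.sum_add_distrib, Finset.sum_ite_eq',
      ← Finset.mul_sum, if_pos (Finset.mem_univ b)]
  rw [hz i k hik, hz k i hik.symm, Msym ε f σ i k hik, Equiv.swap_comm k i]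
  linear_combination hp * (zp (σ.symm i) - zp (σ.symm k)) * f (Equiv.swap i k * σ) * hγc

lemma fin_val_ne {a b : Fin n} (h : a ≠ b) : (a : ℕ) ≠ (b : ℕ) := fun e => h (Fin.ext e)

lemma YW_hecke (ε : Bool) (i i' : Fin n) (h : (i : ℕ) + 1 = (i' : ℕ)) (f : W n)
    (σ : Equiv.Perm (Fin n)) :
    YW ε i f (Equiv.swap i i' * σ) - YW ε i' (fun τ => f (Equiv.swap i i' * τ)) σ = hp * f σ := by
  have hii' : i ≠ i' := fun e => by rw [e] at h; omega
  have hlt : i < i' := by rw [Fin.lt_def]; omega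
  simp only [YW]
  rw [swap_mul_symm_apply, Equiv.swap_apply_left]
  rw [show (∑ j : Fin n, cγ ε i' σ j * f (Equiv.swap i i' * (Equiv.swap i' j * σ)))
      = ∑ j : Fin n, cγ ε i' σ (Equiv.swap i i' j)
          * f (Equiv.swap i i' * (Equiv.swap i' (Equiv.swap i i' j) * σ)) from
    (Fintype.sum_equiv (Equiv.swap i i')
      (fun j => cγ ε i' σ (Equiv.swap i i' j)
          * f (Equiv.swap i i' * (Equiv.swap i' (Equiv.swap i i' j) * σ)))
      (fun j => cγ ε i' σ j * f (Equiv.swap i i' * (Equiv.swap i' j * σ)))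
      (fun j => rfl)).symm]
  have key : ∀ j : Fin n,
      cγ ε i (Equiv.swap i i' * σ) j * f (Equiv.swap i j * (Equiv.swap i i' * σ))
        - cγ ε i' σ (Equiv.swap i i' j)
            * f (Equiv.swap i i' * (Equiv.swap i' (Equiv.swap i i' j) * σ))
      = if j = i' then f σ else 0 := by
    intro j
    rcases eq_or_ne j i' with hj | hji'
    · rw [if_pos hj, hj, Equiv.swap_apply_right, ← mul_assoc, Equiv.swap_mul_self, one_mul,
        Equiv.swap_comm i' i, ← mul_assoc, Equiv.swap_mul_self, one_mul]
      have hcoef : cγ ε i (Equiv.swap i i' * σ) i' - cγ ε i' σ i = 1 := by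
        have hz : γ ε i (Equiv.swap i i' * σ) i' - γ ε i' σ i = 1 := by
          cases ε <;>
          · simp only [γ, swap_mul_symm_apply, Equiv.swap_apply_left, Equiv.swap_apply_right,
              Bool.false_eq_true, if_false, if_true, if_neg (asymm hlt), if_pos hlt]
            omega
        simp only [cγ, ← Int.cast_sub, hz, Int.cast_one]
      linear_combination f σ * hcoef
    rcases eq_or_ne j i with hj | hji
    · rw [if_neg hji', hj, Equiv.swap_apply_left, cγ_self, cγ_self, zero_mul, zero_mul, sub_zero]
    · rw [if_neg hji', Equiv.swap_apply_of_ne_of_ne hji hji']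
      have hcoef : cγ ε i (Equiv.swap i i' * σ) j = cγ ε i' σ j := by
        have hvj : (j : ℕ) ≠ i := fin_val_ne hji
        have hiff : (j < i) ↔ (j < i') := by rw [Fin.lt_def, Fin.lt_def]; omega
        have hz : γ ε i (Equiv.swap i i' * σ) j = γ ε i' σ j := by
          cases ε <;>
          · simp only [γ, swap_mul_symm_apply, Equiv.swap_apply_left,
              Equiv.swap_apply_of_ne_of_ne hji hji', hiff]
        rw [cγ, hz, cγ]
      have hperm : Equiv.swap i j * (Equiv.swap i i' * σ)
          = Equiv.swap i i' * (Equiv.swap i' j * σ) := by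
        rw [← mul_assoc, ← mul_assoc, Equiv.swap_comm i j,
          swap_cycle₁ j i i' hji hji' hii', Equiv.swap_comm j i']
      rw [hcoef, hperm, sub_self]
  rw [show (∑ j : Fin n, cγ ε i (Equiv.swap i i' * σ) j * f (Equiv.swap i j * (Equiv.swap i i' * σ)))
      = (∑ j : Fin n, (cγ ε i' σ (Equiv.swap i i' j)
          * f (Equiv.swap i i' * (Equiv.swap i' (Equiv.swap i i' j) * σ)) + if j = i' then f σ else 0))
      from Finset.sum_congr rfl fun j _ => by
        have := key j; linear_combination this]
  rw [Finset.sum_add_distrib, Finset.sum_ite_eq' Finset.univ i' (fun _ => f σ),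
    if_pos (Finset.mem_univ i')]
  ring

lemma YW_far (ε : Bool) (x y j : Fin n) (hxy : (x : ℕ) + 1 = (y : ℕ)) (hjx : j ≠ x)
    (hjy : j ≠ y) (f : W n) (σ : Equiv.Perm (Fin n)) :
    YW ε j f (Equiv.swap x y * σ) = YW ε j (fun τ => f (Equiv.swap x y * τ)) σ := by
  have hxy' : x ≠ y := fun e => by rw [e] at hxy; omega
  simp only [YW]
  rw [swap_mul_symm_apply, Equiv.swap_apply_of_ne_of_ne hjx hjy]
  refine congrArg (fun S => zp (σ.symm j) * f (Equiv.swap x y * σ) + hp * S) ?_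
  refine Fintype.sum_equiv (Equiv.swap x y) _ _ fun l => ?_
  rcases eq_or_ne l x with hl | hlx
  · rw [hl, Equiv.swap_apply_left]
    have hcoef : cγ ε j (Equiv.swap x y * σ) x = cγ ε j σ y := by
      have hiff : (x < j) ↔ (y < j) := by
        have h1 : (j : ℕ) ≠ x := fin_val_ne hjx
        have h2 : (j : ℕ) ≠ y := fin_val_ne hjy
        rw [Fin.lt_def, Fin.lt_def]; omega
      have hz : γ ε j (Equiv.swap x y * σ) x = γ ε j σ y := by
        cases ε <;>
        · simp only [γ, swap_mul_symm_apply, Equiv.swap_apply_left,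
            Equiv.swap_apply_of_ne_of_ne hjx hjy, hiff]
      rw [cγ, hz, cγ]
    have hperm : Equiv.swap j x * (Equiv.swap x y * σ) = Equiv.swap x y * (Equiv.swap j y * σ) := by
      rw [← mul_assoc, ← mul_assoc, swap_cycle₁ j x y hjx hjy hxy']
    rw [hcoef, hperm]
  rcases eq_or_ne l y with hl | hly
  · rw [hl, Equiv.swap_apply_right]
    have hcoef : cγ ε j (Equiv.swap x y * σ) y = cγ ε j σ x := by
      have hiff : (y < j) ↔ (x < j) := by
        have h1 : (j : ℕ) ≠ x := fin_val_ne hjx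
        have h2 : (j : ℕ) ≠ y := fin_val_ne hjy
        rw [Fin.lt_def, Fin.lt_def]; omega
      have hz : γ ε j (Equiv.swap x y * σ) y = γ ε j σ x := by
        cases ε <;>
        · simp only [γ, swap_mul_symm_apply, Equiv.swap_apply_right,
            Equiv.swap_apply_of_ne_of_ne hjx hjy, hiff]
      rw [cγ, hz, cγ]
    have hperm : Equiv.swap j y * (Equiv.swap x y * σ) = Equiv.swap x y * (Equiv.swap j x * σ) := by
      rw [← mul_assoc, ← mul_assoc, Equiv.swap_comm x y, swap_cycle₁ j y x hjy hjx (Ne.symm hxy')]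
    rw [hcoef, hperm]
  · rw [Equiv.swap_apply_of_ne_of_ne hlx hly]
    have hcoef : cγ ε j (Equiv.swap x y * σ) l = cγ ε j σ l :=
      cγ_swap_inv ε j l x y σ hjx hjy hlx hly
    have hperm : Equiv.swap j l * (Equiv.swap x y * σ) = Equiv.swap x y * (Equiv.swap j l * σ) := by
      rw [← mul_assoc, ← mul_assoc, swap_disjoint_comm j l x y hjx hjy hlx hly]
    rw [hcoef, hperm]

/-! ### Bridge from the coordinate model to the permutation model -/

lemma upd_eq_comp_swap {m : Fin n → Fin n} {i j p q : Fin n}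
    (h1 : m p = i) (h2 : Function.update m p j q = j) :
    Function.update (Function.update m p j) q i = m ∘ ⇑(Equiv.swap p q) := by
  funext x
  rcases eq_or_ne x q with hx | hxq
  · rw [hx, Function.update_self, Function.comp_apply, Equiv.swap_apply_right, h1]
  · rw [Function.update_of_ne hxq, Function.comp_apply]
    rcases eq_or_ne x p with hx | hxp
    · rw [hx, Function.update_self, Equiv.swap_apply_left]
      have hqp : q ≠ p := fun e => hxq (hx.trans e.symm)
      rw [Function.update_of_ne hqp] at h2
      rw [h2]
    · rw [Function.update_of_ne hxp, Equiv.swap_apply_of_ne_of_ne hxp hxq]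

lemma bij_comp_swap_iff (m : Fin n → Fin n) (p q : Fin n) :
    Function.Bijective (m ∘ ⇑(Equiv.swap p q)) ↔ Function.Bijective m :=
  Function.Bijective.of_comp_iff m (Equiv.swap p q).bijective

lemma bij_swap_comp_iff (m : Fin n → Fin n) (i j : Fin n) :
    Function.Bijective (⇑(Equiv.swap i j) ∘ m) ↔ Function.Bijective m :=
  Function.Bijective.of_comp_iff' (Equiv.swap i j).bijective m

lemma update_symm_self (σ : Equiv.Perm (Fin n)) (i : Fin n) :
    Function.update ⇑σ (σ.symm i) i = ⇑σ := by
  have : Function.update ⇑σ (σ.symm i) i = Function.update ⇑σ (σ.symm i) (σ (σ.symm i)) := by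
    rw [Equiv.apply_symm_apply]
  rw [this, Function.update_eq_self]

lemma comp_swap_symm (σ : Equiv.Perm (Fin n)) (i j : Fin n) :
    ⇑σ ∘ ⇑(Equiv.swap (σ.symm i) (σ.symm j)) = ⇑(Equiv.swap i j) ∘ ⇑σ := by
  funext x
  rcases eq_or_ne x (σ.symm i) with hx | hxi
  · rw [hx, Function.comp_apply, Function.comp_apply, Equiv.swap_apply_left,
      Equiv.apply_symm_apply, Equiv.apply_symm_apply, Equiv.swap_apply_left]
  rcases eq_or_ne x (σ.symm j) with hx | hxj
  · rw [hx, Function.comp_apply, Function.comp_apply, Equiv.swap_apply_right,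
      Equiv.apply_symm_apply, Equiv.apply_symm_apply, Equiv.swap_apply_right]
  · rw [Function.comp_apply, Function.comp_apply,
      Equiv.swap_apply_of_ne_of_ne hxi hxj, Equiv.swap_apply_of_ne_of_ne
        (fun e => hxi (by rw [← e, Equiv.symm_apply_apply]))
        (fun e => hxj (by rw [← e, Equiv.symm_apply_apply]))]

lemma Eop_diag (c : MV n) (hc : wsupp c) (i : Fin n) : Eop i i c = c := by
  funext m
  by_cases hb : Function.Bijective m
  · obtain ⟨σ, rfl⟩ : ∃ σ : Equiv.Perm (Fin n), ⇑σ = m := ⟨Equiv.ofBijective m hb, rfl⟩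
    simp only [Eop, Ea]
    rw [Finset.sum_congr rfl fun a _ => show (if σ a = i then c (Function.update ⇑σ a i) else 0)
        = if a = σ.symm i then c ⇑σ else 0 by
      rcases eq_or_ne a (σ.symm i) with ha | ha
      · rw [if_pos ha, ha, if_pos (σ.apply_symm_apply i), update_symm_self]
      · rw [if_neg ha, if_neg (fun h => ha (by rw [← h, Equiv.symm_apply_apply]))]]
    rw [Finset.sum_ite_eq' Finset.univ (σ.symm i) (fun _ => c ⇑σ),
      if_pos (Finset.mem_univ _)]
  · rw [hc m hb]
    simp only [Eop, Ea]
    refine Finset.sum_eq_zero fun a _ => ?_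
    split_ifs with h
    · rw [← h, Function.update_eq_self, hc m hb]
    · rfl

lemma Gop_eq (i j : Fin n) (hij : i ≠ j) (c : MV n) (hc : wsupp c) (m : Fin n → Fin n) :
    Gop i j c m = c (⇑(Equiv.swap i j) ∘ m) := by
  have hd : Gop i j c m = Eop i j (Eop j i c) m - c m := by rw [Gop, Eop_diag c hc i]
  rw [hd]
  simp only [Eop, Ea]
  by_cases hb : Function.Bijective m
  · obtain ⟨σ, rfl⟩ : ∃ σ : Equiv.Perm (Fin n), ⇑σ = m := ⟨Equiv.ofBijective m hb, rfl⟩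
    rw [Finset.sum_congr rfl fun a _ => show
        (if σ a = i then
          ∑ b : Fin n, (if Function.update ⇑σ a j b = j
            then c (Function.update (Function.update ⇑σ a j) b i) else 0) else 0)
        = if a = σ.symm i then
          ∑ b : Fin n, (if Function.update ⇑σ a j b = j
            then c (Function.update (Function.update ⇑σ a j) b i) else 0) else 0 by
      rcases eq_or_ne a (σ.symm i) with ha | ha
      · rw [if_pos (by rw [ha, σ.apply_symm_apply]), if_pos ha]
      · rw [if_neg (fun h => ha (by rw [← h, Equiv.symm_apply_apply])), if_neg ha]]
    rw [Finset.sum_ite_eq' Finset.univ (σ.symm i) _, if_pos (Finset.mem_univ _)]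
    have hstep : ∀ b : Fin n,
        (if Function.update ⇑σ (σ.symm i) j b = j
          then c (Function.update (Function.update ⇑σ (σ.symm i) j) b i) else 0)
        = (if b = σ.symm i then c ⇑σ else 0)
          + (if b = σ.symm j then c (⇑(Equiv.swap i j) ∘ ⇑σ) else 0) := by
      intro b
      have ha1 : σ.symm i ≠ σ.symm j := fun e => hij (by rw [← σ.apply_symm_apply i, e,
        σ.apply_symm_apply])
      rcases eq_or_ne b (σ.symm i) with hbi | hbi
      · rw [hbi, if_pos (Function.update_self _ _ _), Function.update_idem, update_symm_self,
          if_pos rfl, if_neg ha1, add_zero]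
      rcases eq_or_ne b (σ.symm j) with hbj | hbj
      · have hcond : Function.update ⇑σ (σ.symm i) j b = j := by
          rw [Function.update_of_ne hbi, hbj, σ.apply_symm_apply]
        rw [if_pos hcond, upd_eq_comp_swap (σ.apply_symm_apply i) hcond, if_neg hbi,
          if_pos hbj, zero_add, hbj, comp_swap_symm σ i j]
      · have hcond : ¬ (Function.update ⇑σ (σ.symm i) j b = j) := by
          rw [Function.update_of_ne hbi]
          exact fun h => hbj (by rw [← h, Equiv.symm_apply_apply])
        rw [if_neg hcond, if_neg hbi, if_neg hbj, add_zero]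
    rw [Finset.sum_congr rfl fun b _ => hstep b, Finset.sum_add_distrib,
      Finset.sum_ite_eq' Finset.univ (σ.symm i) (fun _ => c ⇑σ),
      Finset.sum_ite_eq' Finset.univ (σ.symm j) (fun _ => c (⇑(Equiv.swap i j) ∘ ⇑σ)),
      if_pos (Finset.mem_univ _), if_pos (Finset.mem_univ _)]
    ring
  · have h1 : c m = 0 := hc m hb
    have h2 : c (⇑(Equiv.swap i j) ∘ m) = 0 :=
      hc _ (fun hb' => hb ((bij_swap_comp_iff m i j).mp hb'))
    rw [h1, h2, sub_zero]
    refine Finset.sum_eq_zero fun a _ => ?_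
    split_ifs with hcond1
    · refine Finset.sum_eq_zero fun b _ => ?_
      split_ifs with hcond2
      · rw [upd_eq_comp_swap hcond1 hcond2]
        exact hc _ (fun hb' => hb ((bij_comp_swap_iff m a b).mp hb'))
      · rfl
    · rfl

lemma wsupp_Gop (i j : Fin n) (hij : i ≠ j) (c : MV n) (hc : wsupp c) : wsupp (Gop i j c) := by
  intro m hm
  rw [Gop_eq i j hij c hc m]
  exact hc _ (fun hb' => hm ((bij_swap_comp_iff m i j).mp hb'))

lemma Gop_perm (i j : Fin n) (hij : i ≠ j) (c : MV n) (hc : wsupp c) (σ : Equiv.Perm (Fin n)) :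
    Gop i j c ⇑σ = c ⇑(Equiv.swap i j * σ) := by
  rw [Gop_eq i j hij c hc ⇑σ]; rfl

lemma Yop_zero (ε : Bool) (i : Fin n) (c : MV n) (hc : wsupp c)
    (m : Fin n → Fin n) (hm : ¬ Function.Bijective m) : Yop ε i c m = 0 := by
  have h0 : c m = 0 := hc m hm
  have t1 : (∑ a : Fin n, zp a * Ea a i i c m) = 0 := by
    refine Finset.sum_eq_zero fun a _ => ?_
    rw [Ea]
    split_ifs with h
    · rw [← h, Function.update_eq_self, h0, mul_zero]
    · rw [mul_zero]
  have t2 : Eop i i c m - Eop i i (Eop i i c) m = 0 := by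
    rw [Eop_diag c hc i, Eop_diag c hc i, sub_self]
  have t3 : ∀ j : Fin n, ∀ p : Fin n × Fin n, Ea p.1 i j (Ea p.2 j i c) m = 0 := by
    intro j p
    rw [Ea, Ea]
    split_ifs with h1 h2
    · rw [upd_eq_comp_swap h1 h2]
      exact hc _ (fun hb' => hm ((bij_comp_swap_iff m p.1 p.2).mp hb'))
    · rfl
    · rfl
  have t4 : ∀ j ∈ Finset.univ.filter (fun j : Fin n => j < i), Gop i j c m = 0 := by
    intro j hj
    rw [Finset.mem_filter] at hj
    rw [Gop_eq i j hj.2.ne' c hc m]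
    exact hc _ (fun hb' => hm ((bij_swap_comp_iff m i j).mp hb'))
  rw [Yop, t1, t2, Finset.sum_congr rfl t4]
  cases ε <;>
  · simp only [Bool.false_eq_true, if_false, if_true]
    rw [Finset.sum_congr rfl fun j _ => Finset.sum_eq_zero fun p _ => t3 j p]
    simp

lemma Yop_perm (ε : Bool) (i : Fin n) (c : MV n) (hc : wsupp c) (σ : Equiv.Perm (Fin n)) :
    Yop ε i c ⇑σ = YW ε i (Rmap c) σ := by
  have t1 : (∑ a : Fin n, zp a * Ea a i i c ⇑σ) = zp (σ.symm i) * c ⇑σ := by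
    rw [Finset.sum_congr rfl fun a _ => show zp a * Ea a i i c ⇑σ
        = if a = σ.symm i then zp a * c ⇑σ else 0 by
      rw [Ea]
      rcases eq_or_ne a (σ.symm i) with ha | ha
      · rw [if_pos ha, if_pos (by rw [ha, σ.apply_symm_apply]), ha, update_symm_self]
      · rw [if_neg ha, if_neg (fun h => ha (by rw [← h, Equiv.symm_apply_apply])), mul_zero]]
    rw [Finset.sum_ite_eq' Finset.univ (σ.symm i) (fun a => zp a * c ⇑σ),
      if_pos (Finset.mem_univ _)]
  have t2 : Eop i i c ⇑σ - Eop i i (Eop i i c) ⇑σ = 0 := by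
    rw [Eop_diag c hc i, Eop_diag c hc i, sub_self]
  have t3 : ∀ (j : Fin n) (p : Fin n × Fin n), p.1 ≠ p.2 →
      Ea p.1 i j (Ea p.2 j i c) ⇑σ
        = if p = (σ.symm i, σ.symm j) then c ⇑(Equiv.swap i j * σ) else 0 := by
    intro j p hne
    rw [Ea, Ea]
    rcases eq_or_ne p (σ.symm i, σ.symm j) with hp | hp
    · have hp1 : p.1 = σ.symm i := by rw [hp]
      have hp2 : p.2 = σ.symm j := by rw [hp]
      have hij : i ≠ j := by
        intro e; exact hne (by rw [hp1, hp2, e])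
      have hcond1 : ⇑σ p.1 = i := by rw [hp1, σ.apply_symm_apply]
      have hcond2 : Function.update ⇑σ p.1 j p.2 = j := by
        rw [Function.update_of_ne hne.symm, hp2, σ.apply_symm_apply]
      rw [if_pos hcond1, if_pos hcond2, if_pos hp, upd_eq_comp_swap hcond1 hcond2, hp1, hp2,
        comp_swap_symm σ i j]
      rfl
    · rw [if_neg hp]
      split_ifs with h1 h2
      · exfalso
        have hp1 : p.1 = σ.symm i := by rw [← h1, Equiv.symm_apply_apply]
        rw [Function.update_of_ne hne.symm] at h2
        have hp2 : p.2 = σ.symm j := by rw [← h2, Equiv.symm_apply_apply]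
        exact hp (Prod.ext hp1 hp2)
      · rfl
      · rfl
  have t4 : ∀ j ∈ Finset.univ.filter (fun j : Fin n => j < i),
      Gop i j c ⇑σ = c ⇑(Equiv.swap i j * σ) :=
    fun j hj => Gop_perm i j ((Finset.mem_filter.mp hj).2.ne') c hc σ
  have tsum : ∀ j : Fin n,
      (∑ p ∈ Finset.univ.filter (fun p : Fin n × Fin n => p.1 < p.2), Ea p.1 i j (Ea p.2 j i c) ⇑σ)
        = if σ.symm i < σ.symm j then c ⇑(Equiv.swap i j * σ) else 0 := by
    intro j
    rw [Finset.sum_congr rfl fun p hp => t3 j p (Finset.mem_filter.mp hp).2.ne,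
      Finset.sum_ite_eq' _ (σ.symm i, σ.symm j) (fun _ => c ⇑(Equiv.swap i j * σ))]
    congr 1
    simp [Finset.mem_filter]
  have tsum' : ∀ j : Fin n,
      (∑ p ∈ Finset.univ.filter (fun p : Fin n × Fin n => p.2 < p.1), Ea p.1 i j (Ea p.2 j i c) ⇑σ)
        = if σ.symm j < σ.symm i then c ⇑(Equiv.swap i j * σ) else 0 := by
    intro j
    rw [Finset.sum_congr rfl fun p hp => t3 j p (Finset.mem_filter.mp hp).2.ne',
      Finset.sum_ite_eq' _ (σ.symm i, σ.symm j) (fun _ => c ⇑(Equiv.swap i j * σ))]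
    congr 1
    simp [Finset.mem_filter]
  have tcoef : ∀ j : Fin n, cγ ε i σ j * Rmap c (Equiv.swap i j * σ)
      = (if (if ε then σ.symm i < σ.symm j else σ.symm j < σ.symm i)
          then c ⇑(Equiv.swap i j * σ) else 0)
        - (if j < i then c ⇑(Equiv.swap i j * σ) else 0) := by
    intro j
    rw [cγ, γ, Int.cast_sub, sub_mul, Rmap]
    congr 1 <;> · rw [apply_ite (fun z : ℤ => (z : A n)), Int.cast_one, Int.cast_zero, ite_mul,
      one_mul, zero_mul]
  rw [YW, Finset.sum_congr rfl fun j _ => tcoef j, Finset.sum_sub_distrib]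
  rw [Yop, t1, t2, mul_zero, add_zero, Finset.sum_congr rfl t4]
  cases ε
  · simp only [Bool.false_eq_true, if_false]
    rw [Finset.sum_congr rfl fun j _ => tsum' j, Finset.sum_filter]
    simp only [Rmap]
    ring
  · simp only [if_true]
    rw [Finset.sum_congr rfl fun j _ => tsum j, Finset.sum_filter]
    simp only [Rmap]
    ring

lemma wsupp_Yop (ε : Bool) (i : Fin n) (c : MV n) (hc : wsupp c) : wsupp (Yop ε i c) :=
  fun m hm => Yop_zero ε i c hc m hm

lemma Ea_neg (a i j : Fin n) (d : MV n) :
    Ea a i j (fun m' => -(d m')) = fun m => -(Ea a i j d m) := by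
  funext m; rw [Ea, Ea]; split_ifs <;> simp

lemma Eop_neg (i j : Fin n) (d : MV n) :
    Eop i j (fun m' => -(d m')) = fun m => -(Eop i j d m) := by
  funext m; simp [Eop, Ea_neg]

lemma Gop_neg (i j : Fin n) (d : MV n) :
    Gop i j (fun m' => -(d m')) = fun m => -(Gop i j d m) := by
  funext m
  simp only [Gop, Eop_neg]
  ring

lemma Yop_neg (ε : Bool) (i : Fin n) (d : MV n) :
    Yop ε i (fun m' => -(d m')) = fun m => -(Yop ε i d m) := by
  funext m
  cases ε <;>
  · simp only [Yop, Ea_neg, Eop_neg, Gop_neg, Bool.false_eq_true, if_false, if_true,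
      mul_neg, neg_neg, Finset.sum_neg_distrib, neg_sub]
    ring

/-! ### Auxiliary facts for the assembly -/

lemma wsupp_comp_swap {c : MV n} (hc : wsupp c) (x y : Fin n) (m : Fin n → Fin n)
    (hm : ¬ Function.Bijective m) : c (⇑(Equiv.swap x y) ∘ m) = 0 :=
  hc _ (fun hb' => hm ((bij_swap_comp_iff m x y).mp hb'))

lemma hecke_general (ε : Bool) (i : ℕ) (hi : i + 1 < n) (c : MV n) (hc : wsupp c)
    (m : Fin n → Fin n) :
    Gop (fin1 i hi) (fin2 i hi) (Yop ε (fin1 i hi) c) m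
      - Yop ε (fin2 i hi) (Gop (fin1 i hi) (fin2 i hi) c) m = hp * c m := by
  set x := fin1 i hi with hxdef
  set y := fin2 i hi with hydef
  have hval : (x : ℕ) + 1 = (y : ℕ) := rfl
  have hxy : x ≠ y := Fin.ne_of_val_ne (by omega)
  by_cases hb : Function.Bijective m
  · obtain ⟨σ, rfl⟩ : ∃ σ : Equiv.Perm (Fin n), ⇑σ = m := ⟨Equiv.ofBijective m hb, rfl⟩
    rw [Gop_eq x y hxy (Yop ε x c) (wsupp_Yop ε x c hc) ⇑σ]
    rw [show ⇑(Equiv.swap x y) ∘ ⇑σ = ⇑(Equiv.swap x y * σ) from rfl]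
    rw [Yop_perm ε x c hc (Equiv.swap x y * σ),
      Yop_perm ε y (Gop x y c) (wsupp_Gop x y hxy c hc) σ]
    have hR : Rmap (Gop x y c) = fun τ => Rmap c (Equiv.swap x y * τ) :=
      funext fun τ => Gop_perm x y hxy c hc τ
    rw [hR]
    exact YW_hecke ε x y hval (Rmap c) σ
  · rw [Gop_eq x y hxy (Yop ε x c) (wsupp_Yop ε x c hc) m,
      Yop_zero ε x c hc _ (fun hb' => hb ((bij_swap_comp_iff m x y).mp hb')),
      Yop_zero ε y (Gop x y c) (wsupp_Gop x y hxy c hc) m hb, hc m hb, sub_zero, mul_zero]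

lemma far_general (ε : Bool) (i : ℕ) (hi : i + 1 < n) (j : Fin n) (hj1 : (j : ℕ) ≠ i)
    (hj2 : (j : ℕ) ≠ i + 1) (c : MV n) (hc : wsupp c) :
    Gop (fin1 i hi) (fin2 i hi) (Yop ε j c) = Yop ε j (Gop (fin1 i hi) (fin2 i hi) c) := by
  set x := fin1 i hi with hxdef
  set y := fin2 i hi with hydef
  have hval : (x : ℕ) + 1 = (y : ℕ) := rfl
  have hxy : x ≠ y := Fin.ne_of_val_ne (by omega)
  have hjx : j ≠ x := Fin.ne_of_val_ne hj1
  have hjy : j ≠ y := Fin.ne_of_val_ne hj2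
  funext m
  by_cases hb : Function.Bijective m
  · obtain ⟨σ, rfl⟩ : ∃ σ : Equiv.Perm (Fin n), ⇑σ = m := ⟨Equiv.ofBijective m hb, rfl⟩
    rw [Gop_eq x y hxy (Yop ε j c) (wsupp_Yop ε j c hc) ⇑σ]
    rw [show ⇑(Equiv.swap x y) ∘ ⇑σ = ⇑(Equiv.swap x y * σ) from rfl]
    rw [Yop_perm ε j c hc (Equiv.swap x y * σ),
      Yop_perm ε j (Gop x y c) (wsupp_Gop x y hxy c hc) σ]
    have hR : Rmap (Gop x y c) = fun τ => Rmap c (Equiv.swap x y * τ) :=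
      funext fun τ => Gop_perm x y hxy c hc τ
    rw [hR]
    exact YW_far ε x y j hval hjx hjy (Rmap c) σ
  · rw [Gop_eq x y hxy (Yop ε j c) (wsupp_Yop ε j c hc) m,
      Yop_zero ε j c hc _ (fun hb' => hb ((bij_swap_comp_iff m x y).mp hb')),
      Yop_zero ε j (Gop x y c) (wsupp_Gop x y hxy c hc) m hb]

/-- on `V_{(1,…,1)} ⊗ ℂ[z_1,…,z_n,h]`, the assignments
`y_i ↦ Y_i^+`, `c ↦ h`, `σ_j ↦ G_{j,j+1}` (resp. `y_i ↦ Y_i^−`, `c ↦ −h`,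
`σ_j ↦ −G_{j,j+1}`) define representations of the degenerate affine Hecke algebra. -/
theorem statement16 (n : ℕ) :
    -- the operators Y_i^± pairwise commute
    (∀ (ε : Bool) (i j : Fin n) (c : MV n), wsupp c →
      Yop ε i (Yop ε j c) = Yop ε j (Yop ε i c)) ∧
    -- Coxeter relations for the G_{j,j+1}: involutivity
    (∀ (i : ℕ) (hi : i + 1 < n) (c : MV n), wsupp c →
      Gop (fin1 i hi) (fin2 i hi) (Gop (fin1 i hi) (fin2 i hi) c) = c) ∧
    -- Coxeter relations: far commutation
    (∀ (i j : ℕ) (hi : i + 1 < n) (hj : j + 1 < n), i + 1 < j →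
      ∀ c : MV n, wsupp c →
        Gop (fin1 i hi) (fin2 i hi) (Gop (fin1 j hj) (fin2 j hj) c) =
          Gop (fin1 j hj) (fin2 j hj) (Gop (fin1 i hi) (fin2 i hi) c)) ∧
    -- Coxeter relations: braid relation
    (∀ (i : ℕ) (hi : i + 1 < n) (hi2 : i + 1 + 1 < n) (c : MV n), wsupp c →
      Gop (fin1 i hi) (fin2 i hi)
          (Gop (fin1 (i+1) hi2) (fin2 (i+1) hi2) (Gop (fin1 i hi) (fin2 i hi) c)) =
        Gop (fin1 (i+1) hi2) (fin2 (i+1) hi2)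
          (Gop (fin1 i hi) (fin2 i hi) (Gop (fin1 (i+1) hi2) (fin2 (i+1) hi2) c))) ∧
    -- Hecke relation for the `+` case: G_{i,i+1} Y_i^+ − Y_{i+1}^+ G_{i,i+1} = h
    (∀ (i : ℕ) (hi : i + 1 < n) (c : MV n), wsupp c →
      (fun m => Gop (fin1 i hi) (fin2 i hi) (Yop true (fin1 i hi) c) m
          - Yop true (fin2 i hi) (Gop (fin1 i hi) (fin2 i hi) c) m) =
        fun m => hp * c m) ∧
    -- `+` case: G_{i,i+1} Y_j^+ = Y_j^+ G_{i,i+1} for j ≠ i, i+1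
    (∀ (i : ℕ) (hi : i + 1 < n) (j : Fin n), (j : ℕ) ≠ i → (j : ℕ) ≠ i + 1 →
      ∀ c : MV n, wsupp c →
        Gop (fin1 i hi) (fin2 i hi) (Yop true j c) =
          Yop true j (Gop (fin1 i hi) (fin2 i hi) c)) ∧
    -- Hecke relation for the `−` case: (−G_{i,i+1}) Y_i^− − Y_{i+1}^− (−G_{i,i+1}) = −h
    (∀ (i : ℕ) (hi : i + 1 < n) (c : MV n), wsupp c →
      (fun m => -(Gop (fin1 i hi) (fin2 i hi) (Yop false (fin1 i hi) c) m)
          - Yop false (fin2 i hi) (fun m' => -(Gop (fin1 i hi) (fin2 i hi) c m')) m) =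
        fun m => -(hp * c m)) ∧
    -- `−` case: G_{i,i+1} Y_j^− = Y_j^− G_{i,i+1} for j ≠ i, i+1
    (∀ (i : ℕ) (hi : i + 1 < n) (j : Fin n), (j : ℕ) ≠ i → (j : ℕ) ≠ i + 1 →
      ∀ c : MV n, wsupp c →
        Gop (fin1 i hi) (fin2 i hi) (Yop false j c) =
          Yop false j (Gop (fin1 i hi) (fin2 i hi) c)) := by
  refine ⟨?_, ?_, ?_, ?_, ?_, ?_, ?_, ?_⟩
  · -- commutativity of the Y's
    intro ε i j c hc
    funext m
    by_cases hb : Function.Bijective m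
    · obtain ⟨σ, rfl⟩ : ∃ σ : Equiv.Perm (Fin n), ⇑σ = m := ⟨Equiv.ofBijective m hb, rfl⟩
      have h1 : Rmap (Yop ε j c) = YW ε j (Rmap c) := funext fun τ => Yop_perm ε j c hc τ
      have h2 : Rmap (Yop ε i c) = YW ε i (Rmap c) := funext fun τ => Yop_perm ε i c hc τ
      rw [Yop_perm ε i (Yop ε j c) (wsupp_Yop ε j c hc) σ,
        Yop_perm ε j (Yop ε i c) (wsupp_Yop ε i c hc) σ, h1, h2, YW_comm]
    · rw [Yop_zero ε i (Yop ε j c) (wsupp_Yop ε j c hc) m hb,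
        Yop_zero ε j (Yop ε i c) (wsupp_Yop ε i c hc) m hb]
  · -- involutivity
    intro i hi c hc
    have hxy : fin1 i hi ≠ fin2 i hi := Fin.ne_of_val_ne (by show i ≠ i + 1; omega)
    funext m
    rw [Gop_eq _ _ hxy (Gop _ _ c) (wsupp_Gop _ _ hxy c hc) m, Gop_eq _ _ hxy c hc]
    congr 1
    funext t
    simp
  · -- far commutation
    intro i j hi hj hij c hc
    have hxy : fin1 i hi ≠ fin2 i hi := Fin.ne_of_val_ne (by show i ≠ i + 1; omega)
    have hzw : fin1 j hj ≠ fin2 j hj := Fin.ne_of_val_ne (by show j ≠ j + 1; omega)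
    have hcomm := swap_disjoint_comm (fin1 i hi) (fin2 i hi) (fin1 j hj) (fin2 j hj)
      (Fin.ne_of_val_ne (by show i ≠ j; omega))
      (Fin.ne_of_val_ne (by show i ≠ j + 1; omega))
      (Fin.ne_of_val_ne (by show i + 1 ≠ j; omega))
      (Fin.ne_of_val_ne (by show i + 1 ≠ j + 1; omega))
    funext m
    rw [Gop_eq _ _ hxy _ (wsupp_Gop _ _ hzw c hc) m, Gop_eq _ _ hzw c hc,
      Gop_eq _ _ hzw _ (wsupp_Gop _ _ hxy c hc) m, Gop_eq _ _ hxy c hc]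
    congr 1
    funext t
    simpa using (Equiv.ext_iff.mp hcomm (m t)).symm
  · -- braid relation
    intro i hi hi2 c hc
    have hfold : fin1 (i+1) hi2 = fin2 i hi := rfl
    rw [hfold]
    have hxy : fin1 i hi ≠ fin2 i hi := Fin.ne_of_val_ne (by show i ≠ i + 1; omega)
    have hyz : fin2 i hi ≠ fin2 (i+1) hi2 := Fin.ne_of_val_ne (by show i + 1 ≠ i + 1 + 1; omega)
    have hxz : fin1 i hi ≠ fin2 (i+1) hi2 := Fin.ne_of_val_ne (by show i ≠ i + 1 + 1; omega)
    have hbraid := swap_braid (fin1 i hi) (fin2 i hi) (fin2 (i+1) hi2) hxy hxz hyz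
    funext m
    rw [Gop_eq _ _ hxy _ (wsupp_Gop _ _ hyz _ (wsupp_Gop _ _ hxy c hc)) m,
      Gop_eq _ _ hyz _ (wsupp_Gop _ _ hxy c hc) _,
      Gop_eq _ _ hxy c hc _,
      Gop_eq _ _ hyz _ (wsupp_Gop _ _ hxy _ (wsupp_Gop _ _ hyz c hc)) m,
      Gop_eq _ _ hxy _ (wsupp_Gop _ _ hyz c hc) _,
      Gop_eq _ _ hyz c hc _]
    congr 1
    funext t
    simpa using Equiv.ext_iff.mp hbraid (m t)
  · -- Hecke relation, + case
    intro i hi c hc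
    funext m
    exact hecke_general true i hi c hc m
  · intro i hi j hj1 hj2 c hc
    exact far_general true i hi j hj1 hj2 c hc
  · -- Hecke relation, − case
    intro i hi c hc
    funext m
    have h := hecke_general false i hi c hc m
    have hneg := congrFun (Yop_neg false (fin2 i hi) (Gop (fin1 i hi) (fin2 i hi) c)) m
    rw [hneg]
    linear_combination -h
  · intro i hi j hj1 hj2 c hc
    exact far_general false i hi j hj1 hj2 c hc


end GRTV
end
end
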